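/- arXiv:1301.4972 — 6 statements merged into one kernel-verified Lean document; each statement's English description precedes it below -/
import Mathlib

section
/- Let f : A* → A* be a morphism and let t be an infinite word of the form t = w · x · f(x) · f²(x) · f³(x) ⋯, where w is a finite word and x is a finite word such that fⁿ(x) is nonempty for all n ≥ 0. Then t is a morphic word. -/
/-- The prefix of length `n` of an infinite word. -/
def wordPrefix {A : Type*} (x : ℕ → A) (n : ℕ) : List A :=
  List.ofFn (fun i : Fin n => x i)

/-- A finite word is a prefix of an infinite word. -/
def IsPrefixOfWord {A : Type*} (w : List A) (x : ℕ → A) : Prop :=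
  wordPrefix x w.length = w

/-- A finite word is a factor of an infinite word. -/
def IsFactor {A : Type*} (w : List A) (x : ℕ → A) : Prop :=
  ∃ i, w = List.ofFn (fun j : Fin w.length => x (i + j))

/-- `y` belongs to the shift orbit closure of `x`. -/
def InOrbitClosure {A : Type*} (y x : ℕ → A) : Prop :=
  ∀ w, IsFactor w y → IsFactor w x

/-- A morphism `A* → B*` applied to a finite word. -/
def applyMorphism {A B : Type*} (f : A → List B) (w : List A) : List B :=
  w.flatMap f

/-- The `n`-th iterate of a morphism applied to a finite word. -/
def applyIter {A : Type*} (f : A → List A) (n : ℕ) (w : List A) : List A :=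
  (applyMorphism f)^[n] w

/-- `y = f(x)` for infinite words: every image of a prefix of `x` is a prefix of `y`. -/
def IsWordImage {A B : Type*} (f : A → List B) (x : ℕ → A) (y : ℕ → B) : Prop :=
  ∀ n, IsPrefixOfWord (applyMorphism f (wordPrefix x n)) y

/-- Prepend a finite word to an infinite word. -/
def prepend {A : Type*} (w : List A) (x : ℕ → A) : ℕ → A :=
  fun n => if h : n < w.length then w.get ⟨n, h⟩ else x (n - w.length)

/-- Strict lexicographic order on infinite words induced by the order `r` on letters. -/
def LexLt {A : Type*} (r : A → A → Prop) (x y : ℕ → A) : Prop :=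
  ∃ n, (∀ i, i < n → x i = y i) ∧ r (x n) (y n)

def LexLe {A : Type*} (r : A → A → Prop) (x y : ℕ → A) : Prop :=
  LexLt r x y ∨ x = y

/-- `l` is the lexicographically least word (w.r.t. `r`) in the shift orbit closure
of `x` beginning with the letter `a`. -/
def IsLeastWord {A : Type*} (r : A → A → Prop) (x : ℕ → A) (a : A) (l : ℕ → A) : Prop :=
  InOrbitClosure l x ∧ l 0 = a ∧ ∀ y, InOrbitClosure y x → y 0 = a → LexLe r l y

/-- `f` is prolongable on `a` (and generates an infinite word from `a`). -/
def IsGenerating {A : Type*} (f : A → List A) (a : A) : Prop :=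
  ∃ s, f a = a :: s ∧ s ≠ [] ∧ ∀ n, applyIter f n s ≠ []

/-- `x` is the pure morphic word `f^ω(a)`. -/
def IsPureMorphic {A : Type*} (f : A → List A) (a : A) (x : ℕ → A) : Prop :=
  x 0 = a ∧ IsGenerating f a ∧ IsWordImage f x x

/-- `x` is a morphic word: the image under a coding of a pure morphic word. -/
def IsMorphic {B : Type*} (x : ℕ → B) : Prop :=
  ∃ (k : ℕ) (g : Fin k → List (Fin k)) (b : Fin k) (c : Fin k → B) (t : ℕ → Fin k),
    IsPureMorphic g b t ∧ x = c ∘ t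

/-- `f ∈ M_x`: each letter `b` has a nonempty "marker" word `p b` such that `f(y)`
begins with `p b` whenever `y ∈ S_x` begins with `b`, and the markers of distinct
letters are prefix-incomparable. -/
def MemM {A B : Type*} (f : A → List B) (x : ℕ → A) : Prop :=
  ∃ p : A → List B, (∀ b, p b ≠ []) ∧
    (∀ (b : A) (y : ℕ → A), InOrbitClosure y x → y 0 = b →
      ∃ n, p b <+: applyMorphism f (wordPrefix y n)) ∧
    (∀ a b : A, a ≠ b → ¬ p a <+: p b ∧ ¬ p b <+: p a)

/-- Every factor occurs infinitely often. -/
def Recurrent {A : Type*} (x : ℕ → A) : Prop :=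
  ∀ w, IsFactor w x → ∀ N, ∃ i, N ≤ i ∧ w = List.ofFn (fun j : Fin w.length => x (i + j))

/-- Ultimately periodic infinite word. -/
def UltimatelyPeriodic {A : Type*} (x : ℕ → A) : Prop :=
  ∃ N p, 0 < p ∧ ∀ n, N ≤ n → x (n + p) = x n

/-- The period-doubling morphism `0 ↦ 01`, `1 ↦ 00`. -/
def pdMorph : Bool → List Bool := fun b => if b then [false, false] else [false, true]

/-- The morphism `0 ↦ 0001`, `1 ↦ 0101`. -/
def gMorph : Bool → List Bool :=
  fun b => if b then [false, true, false, true] else [false, false, false, true]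

/-- The Chacon morphism `0 ↦ 0010`, `1 ↦ 1`. -/
def chMorph : Bool → List Bool := fun b => if b then [true] else [false, false, true, false]

/-- The Rudin–Shapiro morphism `0 ↦ 01`, `1 ↦ 02`, `2 ↦ 31`, `3 ↦ 32`. -/
def rsMorph : Fin 4 → List (Fin 4) := ![[0, 1], [0, 2], [3, 1], [3, 2]]

/-- The Rudin–Shapiro coding `0 ↦ 0`, `1 ↦ 0`, `2 ↦ 1`, `3 ↦ 1`. -/
def rsCoding : Fin 4 → Bool := ![false, false, true, true]

/-- The 2-bit binary representation morphism `0 ↦ 00`, `1 ↦ 01`, `2 ↦ 10`, `3 ↦ 11`. -/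
def hMorph : Fin 4 → List Bool := ![[false, false], [false, true], [true, false], [true, true]]
section lemmas
variable {A B C : Type*}

lemma wordPrefix_length (x : ℕ → A) (n : ℕ) : (wordPrefix x n).length = n := by
  simp [wordPrefix]

lemma wordPrefix_getElem (x : ℕ → A) (n i : ℕ) (h : i < (wordPrefix x n).length) :
    (wordPrefix x n)[i] = x i := by
  simp [wordPrefix]

lemma wordPrefix_take (x : ℕ → A) {n m : ℕ} (h : n ≤ m) :
    (wordPrefix x m).take n = wordPrefix x n := by
  apply List.ext_getElem
  · simp [wordPrefix]; omega
  · intro i h1 h2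
    rw [List.getElem_take]
    rw [wordPrefix_getElem, wordPrefix_getElem]

lemma wordPrefix_prefix (x : ℕ → A) {n m : ℕ} (h : n ≤ m) :
    wordPrefix x n <+: wordPrefix x m := by
  rw [← wordPrefix_take x h]; exact List.take_prefix _ _

lemma isPrefixOfWord_wordPrefix (x : ℕ → A) (n : ℕ) : IsPrefixOfWord (wordPrefix x n) x := by
  unfold IsPrefixOfWord
  rw [wordPrefix_length]

lemma IsPrefixOfWord.mono {u u' : List A} {x : ℕ → A} (h : u <+: u')
    (h' : IsPrefixOfWord u' x) : IsPrefixOfWord u x := by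
  unfold IsPrefixOfWord at *
  have hl : u.length ≤ u'.length := h.length_le
  rw [← wordPrefix_take x hl, h']
  obtain ⟨r, rfl⟩ := h
  simp

lemma applyMorphism_append (f : A → List B) (u v : List A) :
    applyMorphism f (u ++ v) = applyMorphism f u ++ applyMorphism f v := by
  simp [applyMorphism]

lemma applyMorphism_map (f : A → List B) (g : C → A) (l : List C) :
    applyMorphism f (l.map g) = applyMorphism (fun c => f (g c)) l := by
  induction l with
  | nil => rfl
  | cons a l ih => simp [applyMorphism] at *; rw [ih]

lemma applyMorphism_comp_map (f : A → List A) (e : A → B) (g : B → List B)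
    (hg : ∀ a, g (e a) = (f a).map e) (l : List A) :
    applyMorphism g (l.map e) = (applyMorphism f l).map e := by
  induction l with
  | nil => rfl
  | cons a l ih => simp [applyMorphism] at *; rw [ih, hg]

lemma applyIter_comp_map (f : A → List A) (e : A → B) (g : B → List B)
    (hg : ∀ a, g (e a) = (f a).map e) (n : ℕ) (l : List A) :
    applyIter g n (l.map e) = (applyIter f n l).map e := by
  induction n generalizing l with
  | zero => rfl
  | succ n ih =>
    rw [applyIter, applyIter, Function.iterate_succ_apply, Function.iterate_succ_apply,
      applyMorphism_comp_map f e g hg]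
    exact ih _

lemma applyMorphism_join (f : A → List B) (l : List (List A)) :
    applyMorphism f l.flatten = (l.map (applyMorphism f)).flatten := by
  induction l with
  | nil => rfl
  | cons a l ih => simp [applyMorphism] at *; rw [ih]

lemma length_le_join_length (l : List (List A)) (h : ∀ u ∈ l, u ≠ []) :
    l.length ≤ l.flatten.length := by
  induction l with
  | nil => simp
  | cons a l ih =>
    simp only [List.flatten_cons, List.length_append, List.length_cons]
    have h1 : a ≠ [] := h a (by simp)
    have h2 := ih (fun u hu => h u (by simp [hu]))
    have : 0 < a.length := List.length_pos_iff.mpr h1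
    omega

end lemmas

section transport
variable {C B : Type*} [Fintype C]

lemma wordPrefix_comp (e : C → B) (x : ℕ → C) (n : ℕ) :
    wordPrefix (e ∘ x) n = (wordPrefix x n).map e := by
  simp [wordPrefix, List.map_ofFn]; rfl

lemma isMorphic_of_pureMorphic (g : C → List C) (b : C) (c : C → B) (x : ℕ → C)
    (h : IsPureMorphic g b x) : IsMorphic (c ∘ x) := by
  classical
  obtain ⟨h0, ⟨s, hs1, hs2, hs3⟩, himg⟩ := h
  set k := Fintype.card C with hk
  let e : C ≃ Fin k := Fintype.equivFin C
  refine ⟨k, fun i => (g (e.symm i)).map e, e b, c ∘ e.symm, e ∘ x, ⟨?_, ?_, ?_⟩, ?_⟩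
  · simp [h0]
  · have hg : ∀ a : C, ((g (e.symm (e a))).map e) = (g a).map e := by intro a; simp
    refine ⟨s.map e, ?_, by simp [hs2], ?_⟩
    · show (g (e.symm (e b))).map e = _
      rw [Equiv.symm_apply_apply, hs1]; rfl
    · intro n
      rw [applyIter_comp_map g e _ hg]
      simp [hs3 n]
  · intro n
    have hg : ∀ a : C, ((fun i => (g (e.symm i)).map e) (e a)) = (g a).map e := by
      intro a; simp
    rw [wordPrefix_comp, applyMorphism_comp_map g e _ hg]
    have := himg n
    unfold IsPrefixOfWord at this ⊢
    rw [List.length_map, wordPrefix_comp]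
    exact congrArg (List.map e) this
  · funext n; simp
end transport
lemma applyMorphism_const_nil {A B : Type*} (l : List A) :
    applyMorphism (fun _ : A => ([] : List B)) l = [] := by
  induction l with
  | nil => rfl
  | cons a l ih => simpa [applyMorphism] using ih

lemma applyMorphism_cons {A B : Type*} (f : A → List B) (a : A) (l : List A) :
    applyMorphism f (a :: l) = f a ++ applyMorphism f l := by
  simp [applyMorphism]


theorem stmt2 {A : Type*} [Fintype A] (f : A → List A) (w v : List A)
    (hv : ∀ n, applyIter f n v ≠ []) (t : ℕ → A)
    (ht : ∀ n, IsPrefixOfWord (w ++ (List.ofFn (fun i : Fin n => applyIter f i v)).flatten) t) :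
    IsMorphic t := by
  classical
  set w' : List A := w ++ v with hw'def
  set v' : List A := applyMorphism f v with hv'def
  have hv0 : v ≠ [] := hv 0
  have hw'pos : 0 < w'.length := by
    simp only [hw'def, List.length_append]
    have := List.length_pos_iff.mpr hv0
    omega
  have hiter : ∀ i, applyIter f (i + 1) v = applyIter f i v' := by
    intro i
    rw [applyIter, applyIter, Function.iterate_succ_apply]
  have hv' : ∀ n, applyIter f n v' ≠ [] := fun n => hiter n ▸ hv (n + 1)
  have hv'ne : v' ≠ [] := hv' 0
  set J : ℕ → List A := fun k => (List.ofFn (fun i : Fin k => applyIter f i v')).flatten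
    with hJdef
  have hJsucc : ∀ k, J (k + 1) =
      v' ++ (List.ofFn (fun i : Fin k => applyIter f (i + 1) v')).flatten := by
    intro k
    simp only [hJdef, List.ofFn_succ, List.flatten_cons]
    rfl
  have ht' : ∀ k, IsPrefixOfWord (w' ++ J k) t := by
    intro k
    have h := ht (k + 1)
    have heq : w ++ (List.ofFn (fun i : Fin (k + 1) => applyIter f i v)).flatten
        = w' ++ J k := by
      show w ++ (List.ofFn fun i : Fin (k + 1) => applyIter f i v).flatten = _
      rw [List.ofFn_succ, List.flatten_cons]
      have : (fun i : Fin k => applyIter f ((i.succ : Fin (k+1)) : ℕ) v)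
          = fun i : Fin k => applyIter f i v' := by
        funext i
        rw [show ((i.succ : Fin (k+1)) : ℕ) = (i : ℕ) + 1 from rfl, hiter]
      rw [this]
      rw [show applyIter f ((0 : Fin (k+1)) : ℕ) v = v from rfl]
      simp only [hw'def, hJdef, List.append_assoc]
    rw [heq] at h
    exact h
  set N : ℕ → ℕ := fun k => w'.length + (J k).length with hNdef
  have hT : ∀ k, wordPrefix t (N k) = w' ++ J k := by
    intro k
    have h := ht' k
    unfold IsPrefixOfWord at h
    rwa [List.length_append] at h
  have htval : ∀ k i (h : i < N k),
      t i = (w' ++ J k)[i]'(by rw [List.length_append]; exact h) := by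
    intro k i h
    have := hT k
    calc t i = (wordPrefix t (N k))[i]'(by rw [wordPrefix_length]; exact h) := by
            rw [wordPrefix_getElem]
      _ = _ := by simp only [this]
  have hNge : ∀ k, k ≤ N k := by
    intro k
    have h1 : (List.ofFn (fun i : Fin k => applyIter f i v')).length
        ≤ (J k).length := by
      apply length_le_join_length
      intro u hu
      rw [List.mem_ofFn] at hu
      obtain ⟨i, rfl⟩ := hu
      exact hv' i
    rw [List.length_ofFn] at h1
    show k ≤ w'.length + (J k).length
    omega
  -- the new alphabet and morphism
  set C := Option (A ⊕ A) with hCdef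
  set fz : A → C := fun a => some (Sum.inl a) with hfzdef
  set lv : A → C := fun a => some (Sum.inr a) with hlvdef
  set g : C → List C := fun c => match c with
    | none => none :: (w'.tail.map fz ++ v'.map lv)
    | some (Sum.inl _) => []
    | some (Sum.inr a) => (f a).map lv
    with hgdef
  set cd : C → A := fun c => match c with
    | none => t 0
    | some (Sum.inl a) => a
    | some (Sum.inr a) => a
    with hcddef
  set x : ℕ → C := fun n => if n = 0 then none
    else if n < w'.length then fz (t n) else lv (t n) with hxdef
  have hglv : ∀ a, g (lv a) = (f a).map lv := fun a => rfl
  have hgfzl : ∀ (l : List A), applyMorphism g (l.map fz) = [] := by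
    intro l
    rw [applyMorphism_map]
    exact applyMorphism_const_nil l
  have hglvl : ∀ (l : List A), applyMorphism g (l.map lv) = (applyMorphism f l).map lv :=
    fun l => applyMorphism_comp_map f lv g hglv l
  have hcx : cd ∘ x = t := by
    funext n
    simp only [hxdef, hcddef, Function.comp_apply]
    by_cases h0 : n = 0
    · subst h0; simp
    · by_cases h1 : n < w'.length <;> simp [h0, h1, hfzdef, hlvdef]
  -- key prefix identity
  have hpre : ∀ k, wordPrefix x (N k) = (none :: w'.tail.map fz) ++ (J k).map lv := by
    intro k
    apply List.ext_getElem
    · simp only [wordPrefix_length, List.length_append, List.length_cons,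
        List.length_map, List.length_tail, hNdef]
      omega
    · intro i h1 h2
      rw [wordPrefix_getElem]
      have hti := htval k i (by rwa [wordPrefix_length] at h1)
      rw [List.getElem_append] at hti ⊢
      simp only [List.length_cons, List.length_map, List.length_tail] at h2 ⊢
      by_cases hi0 : i = 0
      · subst hi0
        simp only [hxdef, if_pos rfl]
        rw [dif_pos (by omega)]
        rfl
      · by_cases hiw : i < w'.length
        · rw [dif_pos (by omega)]
          obtain ⟨j, rfl⟩ := Nat.exists_eq_succ_of_ne_zero hi0
          rw [List.getElem_cons_succ, List.getElem_map, List.getElem_tail]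
          rw [dif_pos hiw] at hti
          simp only [hxdef, if_neg hi0, if_pos hiw, hti]
        · rw [dif_neg (by omega)]
          rw [dif_neg (by omega)] at hti
          rw [List.getElem_map]
          simp only [show w'.length - 1 + 1 = w'.length from Nat.succ_pred_eq_of_pos hw'pos]
          simp only [hxdef, if_neg hi0, if_neg hiw, hti]
  -- image step
  have himg : ∀ k, applyMorphism g (wordPrefix x (N k)) = wordPrefix x (N (k + 1)) := by
    intro k
    rw [hpre k, hpre (k + 1)]
    have hJf : applyMorphism f (J k)
        = (List.ofFn (fun i : Fin k => applyIter f (i + 1) v')).flatten := by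
      rw [hJdef]
      rw [applyMorphism_join]
      congr 1
      rw [List.map_ofFn]
      congr 1
      funext i
      show applyMorphism f ((applyMorphism f)^[(i:ℕ)] v')
          = (applyMorphism f)^[(i:ℕ)+1] v'
      exact (Function.iterate_succ_apply' _ _ _).symm
    rw [applyMorphism_append, applyMorphism_cons, hgfzl, hglvl, hJf, hJsucc]
    show ((none :: (w'.tail.map fz ++ v'.map lv)) ++ []) ++ _ = _
    simp [List.append_assoc]
  -- conclusion
  rw [← hcx]
  apply isMorphic_of_pureMorphic g none cd x
  refine ⟨by simp [hxdef], ?_, ?_⟩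
  · refine ⟨w'.tail.map fz ++ v'.map lv, rfl, ?_, ?_⟩
    · intro h
      have := congrArg List.length h
      simp [hv'ne, List.length_eq_zero_iff] at this
    · intro n
      match n with
      | 0 =>
        intro h
        have := congrArg List.length h
        simp only [applyIter, Function.iterate_zero, id_eq] at h
        have := congrArg List.length h
        simp [hv'ne, List.length_eq_zero_iff] at this
      | Nat.succ m =>
        rw [applyIter, Function.iterate_succ_apply, ← applyIter]
        rw [show (applyMorphism g (w'.tail.map fz ++ v'.map lv))
            = (applyMorphism f v').map lv by
          rw [applyMorphism_append, hgfzl, hglvl]; rfl]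
        rw [applyIter_comp_map f lv g hglv]
        intro h
        exact hv' (m + 1) (by
          have h2 := List.map_eq_nil_iff.mp h
          rw [applyIter, Function.iterate_succ_apply]
          exact h2)
  · intro n
    have h1 : wordPrefix x n <+: wordPrefix x (N n) := wordPrefix_prefix x (le_trans (le_refl n) (hNge n))
    obtain ⟨r, hr⟩ := h1
    have h2 : applyMorphism g (wordPrefix x n) <+: wordPrefix x (N (n + 1)) := by
      rw [← himg n, ← hr, applyMorphism_append]
      exact ⟨applyMorphism g r, rfl⟩
    exact IsPrefixOfWord.mono h2 (isPrefixOfWord_wordPrefix x _)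
end

section
/- Let f : {0,1}* → {0,1}* be a binary morphism with f(01) ≠ f(10). Then for every infinite binary word x, the morphism f belongs to the class M_x: for each letter b ∈ {0,1} there exists a nonempty finite word p_b such that for every infinite word y in the shift orbit closure of x beginning with b, the word f(y) begins with p_b, and neither of p_0, p_1 is a prefix of the other. -/
section StmtFiveAux

variable {α : Type*}

/-- `s` is a concatenation of blocks, each equal to `u` or `v`. -/
def Prod2 (u v s : List α) : Prop :=
  ∃ ls : List Bool, s = ls.flatMap fun b => bif b then v else u

lemma prod2_nil (u v : List α) : Prod2 u v [] := ⟨[], rfl⟩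

lemma prod2_consA {u v s : List α} (h : Prod2 u v s) : Prod2 u v (u ++ s) := by
  obtain ⟨ls, rfl⟩ := h
  exact ⟨false :: ls, by simp⟩

lemma prod2_consB {u v s : List α} (h : Prod2 u v s) : Prod2 u v (v ++ s) := by
  obtain ⟨ls, rfl⟩ := h
  exact ⟨true :: ls, by simp⟩

lemma prod2_swap {u v s : List α} (h : Prod2 u v s) : Prod2 v u s := by
  obtain ⟨ls, rfl⟩ := h
  induction ls with
  | nil => exact prod2_nil _ _
  | cons b tl ih =>
    rw [List.flatMap_cons]
    cases b
    · exact prod2_consB ih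
    · exact prod2_consA ih

lemma prod2_sub {u v w : List α} (hv : v = u ++ w) {s : List α} (h : Prod2 u v s) :
    Prod2 u w s := by
  subst hv
  obtain ⟨ls, rfl⟩ := h
  induction ls with
  | nil => exact prod2_nil _ _
  | cons b tl ih =>
    rw [List.flatMap_cons]
    cases b
    · exact prod2_consA ih
    · show Prod2 u w ((u ++ w) ++ _)
      rw [List.append_assoc]
      exact prod2_consA (prod2_consB ih)

lemma prod2_decomp {u v w : List α} (hv : v = u ++ w) {s : List α} (h : Prod2 u v s) :
    s = [] ∨ ∃ s', Prod2 u w s' ∧ s = u ++ s' := by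
  subst hv
  obtain ⟨ls, rfl⟩ := h
  cases ls with
  | nil => exact Or.inl rfl
  | cons b tl =>
    right
    have htl : Prod2 u w (tl.flatMap fun b => bif b then u ++ w else u) :=
      prod2_sub rfl ⟨tl, rfl⟩
    cases b
    · exact ⟨_, htl, by simp⟩
    · refine ⟨w ++ _, prod2_consB htl, ?_⟩
      rw [List.flatMap_cons]
      show (u ++ w) ++ _ = _
      rw [List.append_assoc]

lemma flatMap_length_ge (g : Bool → List α) (h0 : g false ≠ []) (h1 : g true ≠ [])
    (l : List Bool) : l.length ≤ (l.flatMap g).length := by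
  induction l with
  | nil => simp
  | cons b tl ih =>
    rw [List.flatMap_cons, List.length_append, List.length_cons]
    have hb : 1 ≤ (g b).length := by
      cases b
      · exact List.length_pos_iff.mpr h0
      · exact List.length_pos_iff.mpr h1
    omega

/-- The conclusion of the marker lemma. -/
def CoreC (u v : List α) : Prop :=
  ∃ m, 0 < m ∧ m ≤ u.length + v.length ∧
    (u ++ v).take m ≠ (v ++ u).take m ∧
    (∀ s, Prod2 u v s → m ≤ (u ++ s).length → (u ++ v).take m <+: u ++ s) ∧
    (∀ t, Prod2 u v t → m ≤ (v ++ t).length → (v ++ u).take m <+: v ++ t)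

lemma coreC_swap {u v : List α} (h : CoreC u v) : CoreC v u := by
  obtain ⟨m, h0, hle, hne, hs, ht⟩ := h
  exact ⟨m, h0, by omega, hne.symm,
    fun s hs' hl => ht s (prod2_swap hs') hl,
    fun t ht' hl => hs t (prod2_swap ht') hl⟩

lemma coreC_prefix {N : ℕ}
    (ih : ∀ u v : List α, u.length + v.length ≤ N → u ≠ [] → v ≠ [] →
      u ++ v ≠ v ++ u → CoreC u v)
    {u v : List α} (hlen : u.length + v.length ≤ N + 1) (hu : u ≠ [])
    (hnc : u ++ v ≠ v ++ u) (hpre : u <+: v) : CoreC u v := by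
  obtain ⟨w, rfl⟩ := hpre
  have hw : w ≠ [] := by rintro rfl; simp at hnc
  have hnc' : u ++ w ≠ w ++ u := by
    intro e
    apply hnc
    calc u ++ (u ++ w) = u ++ (w ++ u) := by rw [e]
    _ = (u ++ w) ++ u := by rw [List.append_assoc]
  have hupos : 0 < u.length := List.length_pos_iff.mpr hu
  have hlen' : u.length + w.length ≤ N := by
    rw [List.length_append] at hlen; omega
  obtain ⟨m, h0, hle, hne, hs, ht⟩ := ih u w hlen' hu hw hnc'
  refine ⟨u.length + m, by omega, by simp only [List.length_append]; omega, ?_, ?_, ?_⟩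
  · rw [List.append_assoc u w u, List.take_length_add_append, List.take_length_add_append]
    intro e
    exact hne (List.append_cancel_left e)
  · intro s hs2 hl
    rcases prod2_decomp rfl hs2 with rfl | ⟨s', hps', rfl⟩
    · exfalso
      simp only [List.append_nil] at hl
      omega
    · rw [List.take_length_add_append, List.prefix_append_right_inj]
      apply hs s' hps'
      simp only [List.length_append] at hl ⊢
      omega
  · intro t ht2 hl
    have ht3 : Prod2 u w t := prod2_sub rfl ht2
    rw [List.append_assoc u w u, List.take_length_add_append, List.append_assoc u w t,
      List.prefix_append_right_inj]
    apply ht t ht3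
    simp only [List.length_append] at hl ⊢
    omega

lemma coreC_main : ∀ N (u v : List α), u.length + v.length ≤ N → u ≠ [] → v ≠ [] →
    u ++ v ≠ v ++ u → CoreC u v := by
  intro N
  induction N with
  | zero =>
    intro u v hl hu _ _
    exfalso
    have := List.length_pos_iff.mpr hu
    omega
  | succ N ih =>
    intro u v hl hu hv hnc
    by_cases hpre : u <+: v
    · exact coreC_prefix ih hl hu hnc hpre
    by_cases hpre' : v <+: u
    · exact coreC_swap (coreC_prefix ih (by omega) hv (fun e => hnc e.symm) hpre')
    have hupos : 0 < u.length := List.length_pos_iff.mpr hu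
    have hvpos : 0 < v.length := List.length_pos_iff.mpr hv
    refine ⟨min u.length v.length, by omega, by omega, ?_, ?_, ?_⟩
    · rw [List.take_append_of_le_length (min_le_left _ _),
        List.take_append_of_le_length (min_le_right _ _)]
      intro e
      rcases le_total u.length v.length with h' | h'
      · rw [min_eq_left h', List.take_length] at e
        apply hpre
        rw [e]
        exact List.take_prefix _ _
      · rw [min_eq_right h', List.take_length] at e
        apply hpre'
        rw [← e]
        exact List.take_prefix _ _
    · intro s _ _
      rw [List.take_append_of_le_length (min_le_left _ _)]
      exact (List.take_prefix _ u).trans (List.prefix_append u s)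
    · intro t _ _
      rw [List.take_append_of_le_length (min_le_right _ _)]
      exact (List.take_prefix _ v).trans (List.prefix_append v t)

lemma wordPrefix_succ (y : ℕ → α) (n : ℕ) :
    wordPrefix y (n + 1) = y 0 :: wordPrefix (fun k => y (k + 1)) n := by
  simp [wordPrefix, List.ofFn_succ, Fin.val_succ]

end StmtFiveAux

theorem stmt5 (f : Bool → List Bool) (h : f false ++ f true ≠ f true ++ f false) :
    ∀ x : ℕ → Bool, MemM f x := by
  intro x
  have hu : f false ≠ [] := by intro e; apply h; rw [e]; simp
  have hv : f true ≠ [] := by intro e; apply h; rw [e]; simp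
  obtain ⟨m, hm0, hmle, hne, hs, ht⟩ :=
    coreC_main ((f false).length + (f true).length) (f false) (f true) le_rfl hu hv h
  have hpf : ∀ l : List Bool, Prod2 (f false) (f true) (l.flatMap f) := by
    intro l
    refine ⟨l, ?_⟩
    have hf : (fun b => bif b then f true else f false) = f := funext fun b => by cases b <;> rfl
    rw [hf]
  refine ⟨fun b => bif b then (f true ++ f false).take m else (f false ++ f true).take m,
    ?_, ?_, ?_⟩
  · intro b e
    have h1 := List.length_pos_iff.mpr hu
    have h2 := List.length_pos_iff.mpr hv
    have := congrArg List.length e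
    cases b <;> simp only [cond_false, cond_true, List.length_take, List.length_append,
      List.length_nil] at this <;> omega
  · intro b y hy hy0
    obtain ⟨m', rfl⟩ : ∃ m', m = m' + 1 := ⟨m - 1, (Nat.succ_pred_eq_of_pos hm0).symm⟩
    refine ⟨m' + 1, ?_⟩
    have hw : applyMorphism f (wordPrefix y (m' + 1)) =
        f (y 0) ++ ((wordPrefix (fun k => y (k + 1)) m').flatMap f) := by
      rw [wordPrefix_succ]
      rfl
    have hlen2 : m' + 1 ≤ (applyMorphism f (wordPrefix y (m' + 1))).length := by
      have h1 := flatMap_length_ge f hu hv (wordPrefix y (m' + 1))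
      have h2 : (wordPrefix y (m' + 1)).length = m' + 1 := by simp [wordPrefix]
      show m' + 1 ≤ ((wordPrefix y (m' + 1)).flatMap f).length
      omega
    rw [hw, hy0] at hlen2
    have hp2 := hpf (wordPrefix (fun k => y (k + 1)) m')
    cases b
    · show (f false ++ f true).take (m' + 1) <+: applyMorphism f (wordPrefix y (m' + 1))
      rw [hw, hy0]
      exact hs _ hp2 hlen2
    · show (f true ++ f false).take (m' + 1) <+: applyMorphism f (wordPrefix y (m' + 1))
      rw [hw, hy0]
      exact ht _ hp2 hlen2
  · intro a b hab
    have hl0 : ((f false ++ f true).take m).length = m := by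
      rw [List.length_take, List.length_append]; omega
    have hl1 : ((f true ++ f false).take m).length = m := by
      rw [List.length_take, List.length_append, Nat.add_comm]; omega
    cases a <;> cases b
    · exact absurd rfl hab
    · exact ⟨fun hp => hne (List.IsPrefix.eq_of_length hp (hl0.trans hl1.symm)),
        fun hp => hne (List.IsPrefix.eq_of_length hp (hl1.trans hl0.symm)).symm⟩
    · exact ⟨fun hp => hne (List.IsPrefix.eq_of_length hp (hl1.trans hl0.symm)).symm,
        fun hp => hne (List.IsPrefix.eq_of_length hp (hl0.trans hl1.symm))⟩
    · exact absurd rfl hab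
end

section
/- Let x be a recurrent infinite binary word over {0,1} in which both letters 0 and 1 occur, and let ρ be the order 0 < 1. Then the lexicographically least word in the shift orbit closure of x beginning with 1 equals 1 followed by the lexicographically least word in the shift orbit closure of x beginning with 0; that is, l_{1,ρ,x} = 1 · l_{0,ρ,x}. -/
section Stmt7Aux

variable {A : Type*}

lemma blt_iff' (a b : Bool) : a < b ↔ a = false ∧ b = true := by
  cases a <;> cases b <;> decide

lemma matches_of_factor {w : List A} {x : ℕ → A}
    (h : IsFactor w x) : ∃ i, ∀ q (hq : q < w.length), w[q] = x (i + q) := by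
  obtain ⟨i, hi⟩ := h
  refine ⟨i, fun q hq => ?_⟩
  rw [List.getElem_of_eq hi hq, List.getElem_ofFn]

lemma factor_of_matches {w : List A} {x : ℕ → A} (i : ℕ)
    (h : ∀ q (hq : q < w.length), w[q] = x (i + q)) : IsFactor w x := by
  refine ⟨i, List.ext_getElem (by simp) (fun q hq1 hq2 => ?_)⟩
  rw [List.getElem_ofFn]
  exact h q hq1

lemma wordPrefix_factor (y : ℕ → A) (n : ℕ) : IsFactor (wordPrefix y n) y := by
  apply factor_of_matches 0
  intro q hq
  simp [wordPrefix]

lemma orbit_match {y x : ℕ → A} (h : InOrbitClosure y x) (L : ℕ) :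
    ∃ p, ∀ q, q < L → y q = x (p + q) := by
  obtain ⟨p, hp⟩ := matches_of_factor (h _ (wordPrefix_factor y L))
  refine ⟨p, fun q hq => ?_⟩
  have hq' : q < (wordPrefix y L).length := by simpa [wordPrefix] using hq
  have := hp q hq'
  simpa [wordPrefix] using this

lemma orbit_of_match {y x : ℕ → A} (h : ∀ L, ∃ p, ∀ q, q < L → y q = x (p + q)) :
    InOrbitClosure y x := by
  intro w hw
  obtain ⟨i, hi⟩ := matches_of_factor hw
  obtain ⟨p, hp⟩ := h (i + w.length)
  apply factor_of_matches (p + i)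
  intro q hq
  rw [hi q hq, hp (i + q) (by omega), add_assoc]

lemma shift_orbit {y x : ℕ → A} (h : InOrbitClosure y x) :
    InOrbitClosure (fun n => y (n + 1)) x := by
  apply orbit_of_match
  intro L
  obtain ⟨p, hp⟩ := orbit_match h (L + 1)
  refine ⟨p + 1, fun q hq => ?_⟩
  have := hp (q + 1) (by omega)
  simpa [add_assoc, add_comm, add_left_comm] using this

lemma prepend_zero (a : A) (z : ℕ → A) : prepend [a] z 0 = a := by
  simp [prepend]

lemma prepend_succ (a : A) (z : ℕ → A) (n : ℕ) : prepend [a] z (n + 1) = z n := by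
  simp [prepend]

lemma prepend_shift {y : ℕ → A} {a : A} (h : y 0 = a) :
    prepend [a] (fun n => y (n + 1)) = y := by
  funext n
  match n with
  | 0 => rw [prepend_zero]; exact h.symm
  | k + 1 => rw [prepend_succ]

lemma matches_of_eq {w : List A} {x : ℕ → A} {i : ℕ}
    (h : w = List.ofFn (fun j : Fin w.length => x (i + j))) :
    ∀ q, ∀ hq : q < w.length, w[q] = x (i + q) := by
  intro q hq
  rw [List.getElem_of_eq h hq, List.getElem_ofFn]

lemma recurrent_match {x : ℕ → A} (hrec : Recurrent x) {y : ℕ → A}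
    (hy : InOrbitClosure y x) (m N : ℕ) :
    ∃ i, N ≤ i ∧ ∀ q, q < m → y q = x (i + q) := by
  have hfac : IsFactor (wordPrefix y m) x := hy _ (wordPrefix_factor y m)
  obtain ⟨i, hi1, hi2⟩ := hrec _ hfac N
  refine ⟨i, hi1, fun q hq => ?_⟩
  have hq' : q < (wordPrefix y m).length := by simpa [wordPrefix] using hq
  have := matches_of_eq hi2 q hq'
  simpa [wordPrefix] using this

lemma left_extend {x z : ℕ → Bool} (hrec : Recurrent x) (hz : InOrbitClosure z x) :
    ∃ b, InOrbitClosure (prepend [b] z) x := by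
  have key : ∀ m, ∃ i, 1 ≤ i ∧ ∀ q, q < m → z q = x (i + q) :=
    fun m => recurrent_match hrec hz m 1
  choose idx hidx1 hmat using key
  by_cases hb : ∀ M, ∃ m, M ≤ m ∧ x (idx m - 1) = true
  · refine ⟨true, orbit_of_match fun L => ?_⟩
    obtain ⟨m, hm1, hm2⟩ := hb L
    refine ⟨idx m - 1, fun q hq => ?_⟩
    match q with
    | 0 => rw [prepend_zero, add_zero]; exact hm2.symm
    | q + 1 =>
      rw [prepend_succ, hmat m q (by omega)]
      congr 1
      have := hidx1 m
      omega
  · push_neg at hb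
    obtain ⟨M, hM⟩ := hb
    refine ⟨false, orbit_of_match fun L => ?_⟩
    refine ⟨idx (max L M) - 1, fun q hq => ?_⟩
    match q with
    | 0 =>
      rw [prepend_zero, add_zero]
      have := hM (max L M) (le_max_right _ _)
      exact (Bool.not_eq_true _ |>.mp this).symm
    | q + 1 =>
      rw [prepend_succ, hmat (max L M) q (by omega)]
      congr 1
      have := hidx1 (max L M)
      omega

lemma all_false {l0 : ℕ → Bool} (h0 : l0 0 = false)
    (h : LexLe (· < ·) l0 (prepend [false] l0)) : ∀ n, l0 n = false := by
  cases h with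
  | inr heq =>
    intro n
    induction n with
    | zero => exact h0
    | succ k ih =>
      have := congrFun heq (k + 1)
      rw [prepend_succ] at this
      rw [this, ih]
  | inl hlt =>
    obtain ⟨m, hag, hltm⟩ := hlt
    simp only [blt_iff'] at hltm
    obtain ⟨hm0, hm1⟩ := hltm
    exfalso
    have hall : ∀ j, j < m → l0 j = false := by
      intro j hj
      induction j with
      | zero => exact h0
      | succ k ih =>
        have := hag (k + 1) hj
        rw [prepend_succ] at this
        rw [this]
        exact ih (by omega)
    match m, hm1, hall with
    | 0, hm1, _ => rw [prepend_zero] at hm1; exact absurd hm1 (by simp)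
    | k + 1, hm1, hall =>
      rw [prepend_succ, hall k (by omega)] at hm1
      exact absurd hm1 (by simp)

lemma one_zeros_mem {x l0 : ℕ → Bool} (hrec : Recurrent x) (hS : InOrbitClosure l0 x)
    (hzero : ∀ n, l0 n = false) (h1 : ∃ i, x i = true) :
    InOrbitClosure (prepend [true] l0) x := by
  obtain ⟨i₁, hi₁⟩ := h1
  apply orbit_of_match
  intro L
  obtain ⟨j, hj1, hj2⟩ := recurrent_match hrec hS L (i₁ + 1)
  have hmatf : ∀ q, q < L → x (j + q) = false := fun q hq => by
    rw [← hj2 q hq]; exact hzero q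
  set i₀ := Nat.findGreatest (fun p => x p = true) (j - 1) with hi₀def
  have h0true : x i₀ = true :=
    Nat.findGreatest_spec (P := fun p => x p = true) (n := j - 1) (m := i₁) (by omega) hi₁
  have hi₀le : i₀ ≤ j - 1 := Nat.findGreatest_le _
  have hgr : ∀ p, i₀ < p → p ≤ j - 1 → x p = false := fun p hp1 hp2 => by
    have := Nat.findGreatest_is_greatest hp1 hp2
    exact (Bool.not_eq_true _).mp this
  refine ⟨i₀, fun q hq => ?_⟩
  match q with
  | 0 => rw [prepend_zero, add_zero]; exact h0true.symm
  | q + 1 =>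
    rw [prepend_succ, hzero]
    by_cases hcase : i₀ + (q + 1) ≤ j - 1
    · exact (hgr _ (by omega) hcase).symm
    · have hlt : (i₀ + (q + 1)) - j < L := by omega
      have := hmatf _ hlt
      rw [show i₀ + (q + 1) = j + ((i₀ + (q + 1)) - j) by omega]
      exact this.symm

lemma lexle_prepend {a : Bool} {u v : ℕ → Bool} (h : LexLe (· < ·) u v) :
    LexLe (· < ·) (prepend [a] u) (prepend [a] v) := by
  cases h with
  | inr h => right; rw [h]
  | inl h =>
    obtain ⟨n, hag, hlt⟩ := h
    left
    refine ⟨n + 1, fun i hi => ?_, ?_⟩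
    · match i with
      | 0 => rw [prepend_zero, prepend_zero]
      | k + 1 => rw [prepend_succ, prepend_succ]; exact hag k (by omega)
    · rw [prepend_succ, prepend_succ]; exact hlt

lemma lexlt_asymm {a b : ℕ → Bool} (h : LexLt (· < ·) a b) (h' : LexLt (· < ·) b a) :
    False := by
  obtain ⟨n, han, hn⟩ := h
  obtain ⟨m, hbm, hm⟩ := h'
  simp only [blt_iff'] at hn hm
  rcases lt_trichotomy n m with hlt | rfl | hgt
  · have h2 := hn.2
    rw [hbm n hlt, hn.1] at h2
    exact absurd h2 (by simp)
  · simp [hn.1] at hm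
  · simp [han m hgt] at hm

end Stmt7Aux

theorem stmt7 (x : ℕ → Bool) (hrec : Recurrent x)
    (h0 : ∃ i, x i = false) (h1 : ∃ i, x i = true)
    (l0 l1 : ℕ → Bool)
    (hl0 : IsLeastWord (· < ·) x false l0) (hl1 : IsLeastWord (· < ·) x true l1) :
    l1 = prepend [true] l0 := by
  obtain ⟨hl0S, hl00, hl0min⟩ := hl0
  obtain ⟨hl1S, hl10, hl1min⟩ := hl1
  have hA : InOrbitClosure (prepend [true] l0) x := by
    obtain ⟨b, hb⟩ := left_extend hrec hl0S
    cases b with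
    | true => exact hb
    | false =>
      have hle : LexLe (· < ·) l0 (prepend [false] l0) :=
        hl0min _ hb (prepend_zero _ _)
      exact one_zeros_mem hrec hl0S (all_false hl00 hle) h1
  have h1' : LexLe (· < ·) l1 (prepend [true] l0) :=
    hl1min _ hA (prepend_zero _ _)
  have h2' : LexLe (· < ·) (prepend [true] l0) l1 := by
    by_cases hc : l1 1 = false
    · have hu : InOrbitClosure (fun n => l1 (n + 1)) x := shift_orbit hl1S
      have hle := hl0min _ hu hc
      have hmono := lexle_prepend (a := true) hle
      rwa [prepend_shift hl10] at hmono
    · left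
      refine ⟨1, fun i hi => ?_, ?_⟩
      · have : i = 0 := by omega
        subst this
        rw [prepend_zero, hl10]
      · show prepend [true] l0 (0 + 1) < l1 1
        rw [prepend_succ, blt_iff']
        exact ⟨hl00, by simpa using hc⟩
  cases h1' with
  | inr h => exact h
  | inl h =>
    cases h2' with
    | inr h' => exact h'.symm
    | inl h' => exact (lexlt_asymm h h').elim
end

section
/- Let f be the period-doubling morphism 0 ↦ 01, 1 ↦ 00. The equation 01 · x = f²(x) has a unique solution among infinite binary words, namely x = g^ω(0), the fixed point of the morphism g : 0 ↦ 0001, 1 ↦ 0101. -/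
section Aux

/-- Letter `j` of the block `f²(a) = 01 0a`. -/
def Bf (a : Bool) (j : ℕ) : Bool := decide (j % 4 = 1) || (decide (j % 4 = 3) && a)

/-- Letter `j` of the block `g(a) = 0a01`. -/
def Bg (a : Bool) (j : ℕ) : Bool := (decide (j % 4 = 1) && a) || decide (j % 4 = 3)

lemma flat_len (f : Bool → List Bool) (h4 : ∀ a, (f a).length = 4) (w : List Bool) :
    (applyMorphism f w).length = 4 * w.length := by
  induction w with
  | nil => simp [applyMorphism]
  | cons a t ih =>
    simp only [applyMorphism, List.flatMap_cons, List.length_append, List.length_cons] at ih ⊢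
    rw [h4, ih]; ring

lemma flat_get (f : Bool → List Bool) (B : Bool → ℕ → Bool)
    (hf : ∀ a, f a = [B a 0, B a 1, B a 2, B a 3])
    (w : List Bool) (i : ℕ) (h : i < 4 * w.length) :
    (applyMorphism f w)[i]? = (w[i/4]?).map (fun a => B a (i % 4)) := by
  induction w generalizing i with
  | nil => simp at h
  | cons a t ih =>
    have hfa : applyMorphism f (a :: t) = f a ++ applyMorphism f t := by
      simp [applyMorphism]
    rw [hfa, hf a]
    by_cases hi : i < 4
    · rw [List.getElem?_append_left (by simp; omega)]
      have h4 : i / 4 = 0 := by omega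
      have hm : i % 4 = i := by omega
      rw [h4, hm]
      interval_cases i <;> simp
    · obtain ⟨j, rfl⟩ : ∃ j, i = j + 4 := ⟨i - 4, by omega⟩
      rw [List.getElem?_append_right (by simp)]
      have hl : j + 4 - ([B a 0, B a 1, B a 2, B a 3] : List Bool).length = j := by simp
      rw [hl, ih j (by simp at h ⊢; omega)]
      have h1 : (j + 4) / 4 = j / 4 + 1 := by omega
      have h2 : (j + 4) % 4 = j % 4 := by omega
      rw [h1, h2]
      simp

lemma prefix_iff (w : List Bool) (y : ℕ → Bool) :
    IsPrefixOfWord w y ↔ ∀ i, i < w.length → w[i]? = some (y i) := by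
  unfold IsPrefixOfWord wordPrefix
  constructor
  · intro h i hi
    conv_lhs => rw [← h]
    simp [List.getElem?_ofFn, List.ofFnNthVal, hi]
  · intro h
    apply List.ext_getElem?
    intro i
    by_cases hi : i < w.length
    · rw [h i hi]
      simp [List.getElem?_ofFn, List.ofFnNthVal, hi]
    · rw [List.getElem?_eq_none (by simpa using hi),
        List.getElem?_eq_none (by omega)]

lemma image_iff (f : Bool → List Bool) (B : Bool → ℕ → Bool)
    (hf : ∀ a, f a = [B a 0, B a 1, B a 2, B a 3])
    (x y : ℕ → Bool) :
    IsWordImage f x y ↔ ∀ m, y m = B (x (m / 4)) (m % 4) := by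
  have h4 : ∀ a, (f a).length = 4 := fun a => by rw [hf a]; rfl
  have hwp : ∀ n, (wordPrefix x n).length = n := fun n => by
    simp [wordPrefix]
  have hwg : ∀ n i, i < n → (wordPrefix x n)[i]? = some (x i) := by
    intro n i hi
    simp [wordPrefix, List.getElem?_ofFn, List.ofFnNthVal, hi]
  constructor
  · intro h m
    have hlen : m < (applyMorphism f (wordPrefix x (m / 4 + 1))).length := by
      rw [flat_len f h4, hwp]; omega
    have key := (prefix_iff _ y).1 (h (m / 4 + 1)) m hlen
    rw [flat_get f B hf _ m (by rw [hwp]; omega),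
      hwg _ _ (by omega)] at key
    simpa using key.symm
  · intro h n
    rw [prefix_iff]
    intro i hi
    rw [flat_len f h4, hwp] at hi
    rw [flat_get f B hf _ i (by rw [hwp]; omega), hwg _ _ (by omega)]
    simp [h i]

/-- The recurrence characterizing the fixed point of `g`. -/
def RecW (x : ℕ → Bool) : Prop :=
  ∀ k, x (4*k) = false ∧ x (4*k+1) = x k ∧ x (4*k+2) = false ∧ x (4*k+3) = true

lemma rec_unique {x z : ℕ → Bool} (hx : RecW x) (hz : RecW z) : x = z := by
  funext n
  induction n using Nat.strong_induction_on with
  | _ n ih =>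
    rcases Nat.eq_zero_or_pos n with rfl | hn
    · have h1 := (hx 0).1
      have h2 := (hz 0).1
      simp only [Nat.mul_zero] at h1 h2
      rw [h1, h2]
    · have hj : n % 4 = 0 ∨ n % 4 = 1 ∨ n % 4 = 2 ∨ n % 4 = 3 := by omega
      set k := n / 4 with hk
      have hkn : k < n := by omega
      rcases hj with h | h | h | h
      · rw [show n = 4 * k from by omega, (hx k).1, (hz k).1]
      · rw [show n = 4 * k + 1 from by omega, (hx k).2.1, (hz k).2.1]
        exact ih k hkn
      · rw [show n = 4 * k + 2 from by omega, (hx k).2.2.1, (hz k).2.2.1]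
      · rw [show n = 4 * k + 3 from by omega, (hx k).2.2.2, (hz k).2.2.2]

lemma hg_blocks : ∀ a, gMorph a = [Bg a 0, Bg a 1, Bg a 2, Bg a 3] := by decide

lemma hf_blocks :
    ∀ a, applyMorphism pdMorph (pdMorph a) = [Bf a 0, Bf a 1, Bf a 2, Bf a 3] := by
  decide

lemma z_rec {z : ℕ → Bool} (hz : IsPureMorphic gMorph false z) : RecW z := by
  have h := (image_iff gMorph Bg hg_blocks z z).1 hz.2.2
  intro k
  refine ⟨?_, ?_, ?_, ?_⟩
  · have := h (4*k)
    rw [show (4*k)/4 = k from by omega, show (4*k)%4 = 0 from by omega] at this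
    simpa [Bg] using this
  · have := h (4*k+1)
    rw [show (4*k+1)/4 = k from by omega, show (4*k+1)%4 = 1 from by omega] at this
    simpa [Bg] using this
  · have := h (4*k+2)
    rw [show (4*k+2)/4 = k from by omega, show (4*k+2)%4 = 2 from by omega] at this
    simpa [Bg] using this
  · have := h (4*k+3)
    rw [show (4*k+3)/4 = k from by omega, show (4*k+3)%4 = 3 from by omega] at this
    simpa [Bg] using this

lemma prepend_ge (x : ℕ → Bool) (m : ℕ) (hm : 2 ≤ m) :
    prepend [false, true] x m = x (m - 2) := by
  unfold prepend
  rw [dif_neg (by simp; omega)]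
  simp

lemma x_rec {x : ℕ → Bool}
    (hx : IsWordImage (fun a => applyMorphism pdMorph (pdMorph a)) x
      (prepend [false, true] x)) : RecW x := by
  have h := (image_iff _ Bf hf_blocks x _).1 hx
  have e : ∀ m, 2 ≤ m → x (m - 2) = Bf (x (m / 4)) (m % 4) := by
    intro m hm
    have := h m
    rwa [prepend_ge x m hm] at this
  intro k
  refine ⟨?_, ?_, ?_, ?_⟩
  · have := e (4*k+2) (by omega)
    rw [show 4*k+2-2 = 4*k from by omega, show (4*k+2)/4 = k from by omega,
      show (4*k+2)%4 = 2 from by omega] at this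
    simpa [Bf] using this
  · have := e (4*k+3) (by omega)
    rw [show 4*k+3-2 = 4*k+1 from by omega, show (4*k+3)/4 = k from by omega,
      show (4*k+3)%4 = 3 from by omega] at this
    simpa [Bf] using this
  · have := e (4*k+4) (by omega)
    rw [show 4*k+4-2 = 4*k+2 from by omega, show (4*k+4)/4 = k+1 from by omega,
      show (4*k+4)%4 = 0 from by omega] at this
    simpa [Bf] using this
  · have := e (4*k+5) (by omega)
    rw [show 4*k+5-2 = 4*k+3 from by omega, show (4*k+5)/4 = k+1 from by omega,
      show (4*k+5)%4 = 1 from by omega] at this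
    simpa [Bf] using this

lemma rec_image {x : ℕ → Bool} (hx : RecW x) :
    IsWordImage (fun a => applyMorphism pdMorph (pdMorph a)) x
      (prepend [false, true] x) := by
  rw [image_iff _ Bf hf_blocks]
  intro m
  rcases Nat.lt_or_ge m 2 with hm | hm
  · interval_cases m <;> simp [prepend, Bf]
  · rw [prepend_ge x m hm]
    have hj : m % 4 = 0 ∨ m % 4 = 1 ∨ m % 4 = 2 ∨ m % 4 = 3 := by omega
    set k := m / 4 with hk
    rcases hj with h | h | h | h
    · have hk1 : 1 ≤ k := by omega
      rw [show m - 2 = 4 * (k-1) + 2 from by omega, (hx (k-1)).2.2.1, h]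
      simp [Bf]
    · have hk1 : 1 ≤ k := by omega
      rw [show m - 2 = 4 * (k-1) + 3 from by omega, (hx (k-1)).2.2.2, h]
      simp [Bf]
    · rw [show m - 2 = 4 * k from by omega, (hx k).1, h]
      simp [Bf]
    · rw [show m - 2 = 4 * k + 1 from by omega, (hx k).2.1, h]
      simp [Bf]

end Aux

theorem stmt9 (z : ℕ → Bool) (hz : IsPureMorphic gMorph false z) :
    IsWordImage (fun a => applyMorphism pdMorph (pdMorph a)) z (prepend [false, true] z) ∧
    ∀ x : ℕ → Bool,
      IsWordImage (fun a => applyMorphism pdMorph (pdMorph a)) x (prepend [false, true] x) →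
      x = z := by
  have hzr : RecW z := z_rec hz
  exact ⟨rec_image hzr, fun x hx => rec_unique (x_rec hx) hzr⟩
end

section
/- Let d = f^ω(0) be the period-doubling word, where f : 0 ↦ 01, 1 ↦ 00, and let ρ be the order 0 < 1. Then the lexicographically least word in the shift orbit closure of d beginning with 0 is z = g^ω(0), the fixed point of g : 0 ↦ 0001, 1 ↦ 0101. -/
lemma wordPrefix_succ_s10 {A : Type*} (x : ℕ → A) (n : ℕ) :
    wordPrefix x (n+1) = wordPrefix x n ++ [x n] := by
  rw [wordPrefix, List.ofFn_succ']
  simp [wordPrefix, List.concat_eq_append]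

lemma applyMorphism_length {A B : Type*} (f : A → List B) (L : ℕ)
    (hf : ∀ b, (f b).length = L) (w : List A) :
    (applyMorphism f w).length = L * w.length := by
  induction w with
  | nil => simp [applyMorphism]
  | cons a t ih =>
    simp only [applyMorphism, List.flatMap_cons, List.length_append, List.length_cons] at ih ⊢
    rw [hf, ih, Nat.mul_succ, Nat.add_comm]

lemma prefix_eval {A : Type*} {w : List A} {x : ℕ → A} (h : IsPrefixOfWord w x)
    (j : ℕ) (hj : j < w.length) : x j = w[j] := by
  unfold IsPrefixOfWord wordPrefix at h
  have h1 : w[j]? = some (x j) := by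
    rw [← h]
    simp [List.getElem?_ofFn, hj]
  rw [List.getElem?_eq_getElem hj] at h1
  exact (Option.some_inj.mp h1).symm

lemma fixed_point_block {A : Type*} (f : A → List A) (L : ℕ) (hf : ∀ b, (f b).length = L)
    (x : ℕ → A) (hx : IsWordImage f x x) (k j : ℕ) (hj : j < L) :
    x (L * k + j) = (f (x k))[j]'(by rw [hf]; exact hj) := by
  have h := hx (k+1)
  rw [wordPrefix_succ_s10] at h
  have hsplit : applyMorphism f (wordPrefix x k ++ [x k])
      = applyMorphism f (wordPrefix x k) ++ f (x k) := by
    simp [applyMorphism]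
  rw [hsplit] at h
  have hlen : (applyMorphism f (wordPrefix x k)).length = L * k := by
    rw [applyMorphism_length f L hf]; simp [wordPrefix]
  have hlt : L * k + j < (applyMorphism f (wordPrefix x k) ++ f (x k)).length := by
    simp [List.length_append, hlen, hf]; omega
  have := prefix_eval h (L * k + j) hlt
  rw [this, List.getElem_append_right (by omega)]
  congr 1
  omega

section PD
variable {d z : ℕ → Bool}

lemma pd_block (hx : IsWordImage pdMorph d d) (k : ℕ) :
    d (2*k) = false ∧ d (2*k+1) = !d k := by
  have hf : ∀ b, (pdMorph b).length = 2 := by intro b; cases b <;> rfl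
  have h0 := fixed_point_block pdMorph 2 hf d hx k 0 (by omega)
  have h1 := fixed_point_block pdMorph 2 hf d hx k 1 (by omega)
  cases hdk : d k <;> rw [hdk] at h0 h1 <;> simp [pdMorph] at h0 h1 <;>
    simp [h0, h1, hdk]

lemma g_block (hx : IsWordImage gMorph z z) (k : ℕ) :
    z (4*k) = false ∧ z (4*k+1) = z k ∧ z (4*k+2) = false ∧ z (4*k+3) = true := by
  have hf : ∀ b, (gMorph b).length = 4 := by intro b; cases b <;> rfl
  have h0 := fixed_point_block gMorph 4 hf z hx k 0 (by omega)
  have h1 := fixed_point_block gMorph 4 hf z hx k 1 (by omega)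
  have h2 := fixed_point_block gMorph 4 hf z hx k 2 (by omega)
  have h3 := fixed_point_block gMorph 4 hf z hx k 3 (by omega)
  cases hzk : z k <;> rw [hzk] at h0 h1 h2 h3 <;> simp [gMorph] at h0 h1 h2 h3 <;>
    simp [h0, h1, h2, h3, hzk]

lemma d4 (hx : IsWordImage pdMorph d d) (a : ℕ) :
    d (4*a) = false ∧ d (4*a+1) = true ∧ d (4*a+2) = false ∧ d (4*a+3) = d a := by
  have e0 := (pd_block hx (2*a)).1
  have e1 := (pd_block hx (2*a)).2
  have e2 := (pd_block hx (2*a+1)).1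
  have e3 := (pd_block hx (2*a+1)).2
  have e4 := (pd_block hx a).1
  have e5 := (pd_block hx a).2
  constructor
  · rw [show 4*a = 2*(2*a) by ring]; exact e0
  constructor
  · rw [show 4*a+1 = 2*(2*a)+1 by ring, e1, e4]; rfl
  constructor
  · rw [show 4*a+2 = 2*(2*a+1) by ring]; exact e2
  · rw [show 4*a+3 = 2*(2*a+1)+1 by ring, e3, e5]; simp

lemma triple_zero (hx : IsWordImage pdMorph d d) (i : ℕ)
    (h0 : d i = false) (h1 : d (i+1) = false) (h2 : d (i+2) = false) :
    i % 4 = 2 := by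
  rcases Nat.even_or_odd i with ⟨k, hk⟩ | ⟨k, hk⟩
  · subst hk
    have e1 := (pd_block hx k).2
    rw [show k+k+1 = 2*k+1 by ring] at h1
    rw [e1] at h1
    have hdk : d k = true := by cases h : d k <;> rw [h] at h1 <;> simp_all
    rcases Nat.even_or_odd k with ⟨m, hm⟩ | ⟨m, hm⟩
    · exfalso; subst hm
      have := (pd_block hx m).1
      rw [show m+m = 2*m by ring] at hdk
      rw [this] at hdk; exact Bool.false_ne_true hdk
    · omega
  · exfalso
    subst hk
    have e1 := (pd_block hx k).2
    rw [show 2*k+1 = 2*k+1 by ring] at h0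
    rw [e1] at h0
    have hdk : d k = true := by cases h : d k <;> rw [h] at h0 <;> simp_all
    have e3 := (pd_block hx (k+1)).2
    rw [show 2*k+1+2 = 2*(k+1)+1 by ring, e3] at h2
    have hdk1 : d (k+1) = true := by cases h : d (k+1) <;> rw [h] at h2 <;> simp_all
    rcases Nat.even_or_odd k with ⟨m, hm⟩ | ⟨m, hm⟩
    · subst hm
      have := (pd_block hx m).1
      rw [show m+m = 2*m by ring, this] at hdk; exact Bool.false_ne_true hdk
    · subst hm
      have := (pd_block hx (m+1)).1
      rw [show 2*m+1+1 = 2*(m+1) by ring, this] at hdk1; exact Bool.false_ne_true hdk1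

lemma keyK (hxd : IsWordImage pdMorph d d) (hxz : IsWordImage gMorph z z) :
    ∀ n, z n = true → ∀ i, ¬ (∀ j, j ≤ n → d (i+j) = if j = n then false else z j) := by
  intro n
  induction n using Nat.strong_induction_on with
  | _ n IH =>
  intro hzn i hmatch
  -- z n = true implies n = 4m+3 or n = 4m+1 with z m = true
  have hzrec := g_block hxz
  have hcases : (∃ m, n = 4*m+3) ∨ (∃ m, n = 4*m+1 ∧ z m = true) := by
    have h4 : n % 4 = 0 ∨ n % 4 = 1 ∨ n % 4 = 2 ∨ n % 4 = 3 := by omega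
    rcases h4 with h | h | h | h
    · exfalso; obtain ⟨m, rfl⟩ : ∃ m, n = 4*m := ⟨n/4, by omega⟩
      rw [(hzrec m).1] at hzn; exact Bool.false_ne_true hzn
    · right; obtain ⟨m, rfl⟩ : ∃ m, n = 4*m+1 := ⟨n/4, by omega⟩
      exact ⟨m, rfl, by rw [← (hzrec m).2.1]; exact hzn⟩
    · exfalso; obtain ⟨m, rfl⟩ : ∃ m, n = 4*m+2 := ⟨n/4, by omega⟩
      rw [(hzrec m).2.2.1] at hzn; exact Bool.false_ne_true hzn
    · left; exact ⟨n/4, by omega⟩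
  have hn3 : 3 ≤ n := by
    rcases hcases with ⟨m, rfl⟩ | ⟨m, rfl, hm⟩
    · omega
    · rcases Nat.eq_zero_or_pos m with rfl | h
      · exfalso
        have hz0 : z 0 = false := by have := (hzrec 0).1; simpa using this
        rw [hz0] at hm; exact Bool.false_ne_true hm
      · omega
  -- first three letters of z are 0
  have hz0 : z 0 = false := by have := (hzrec 0).1; simpa using this
  have hz1 : z 1 = false := by have := (hzrec 0).2.1; simpa [hz0] using this
  have hz2 : z 2 = false := by have := (hzrec 0).2.2.1; simpa using this
  have hd0 : d i = false := by
    have := hmatch 0 (by omega); simpa [show (0:ℕ) ≠ n by omega, hz0] using this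
  have hd1 : d (i+1) = false := by
    have := hmatch 1 (by omega); simpa [show (1:ℕ) ≠ n by omega, hz1] using this
  have hd2 : d (i+2) = false := by
    have := hmatch 2 (by omega); simpa [show (2:ℕ) ≠ n by omega, hz2] using this
  have hi2 : i % 4 = 2 := triple_zero hxd i hd0 hd1 hd2
  obtain ⟨l, rfl⟩ : ∃ l, i = 4*l+2 := ⟨i/4, by omega⟩
  have hdrec := d4 hxd
  rcases hcases with ⟨m, rfl⟩ | ⟨m, rfl, hm⟩
  · -- n = 4m+3 : position i+n ≡ 1 mod 4 is a 1 in d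
    have he := hmatch (4*m+3) (le_refl _)
    rw [if_pos rfl] at he
    rw [show 4*l+2+(4*m+3) = 4*(l+m+1)+1 by ring, (hdrec (l+m+1)).2.1] at he
    simp at he
  · -- n = 4m+1 : desubstitute
    refine IH m (by omega) hm l ?_
    intro j hj
    have h1 : d (4*l+2+(4*j+1)) = if 4*j+1 = 4*m+1 then false else z (4*j+1) :=
      hmatch (4*j+1) (by omega)
    rw [show 4*l+2+(4*j+1) = 4*(l+j)+3 by ring, (hdrec (l+j)).2.2.2] at h1
    rw [h1, (hzrec j).2.1]
    by_cases hjm : j = m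
    · simp [hjm]
    · rw [if_neg (by omega), if_neg hjm]

end PD

def Ppos : ℕ → ℕ
  | 0 => 2
  | (t+1) => 4 * Ppos t + 2

def Qlen : ℕ → ℕ
  | 0 => 2
  | (t+1) => 4 * Qlen t - 2

lemma Qlen_ge (t : ℕ) : t + 2 ≤ Qlen t := by
  induction t with
  | zero => simp [Qlen]
  | succ t ih =>
    rw [show Qlen (t+1) = 4 * Qlen t - 2 from rfl]
    omega

section PD2
variable {d z : ℕ → Bool}

lemma occ (hd0 : d 0 = false) (hxd : IsWordImage pdMorph d d) (hxz : IsWordImage gMorph z z) :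
    ∀ t, ∀ j < Qlen t, d (Ppos t + j) = z j := by
  have hdrec := d4 hxd
  have hzrec := g_block hxz
  intro t
  induction t with
  | zero =>
    intro j hj
    rw [show Qlen 0 = 2 from rfl] at hj
    interval_cases j
    · have h1 : d 2 = false := by have := (hdrec 0).2.2.1; simpa using this
      have h2 : z 0 = false := by have := (hzrec 0).1; simpa using this
      rw [show Ppos 0 + 0 = 2 from rfl, h1, h2]
    · have h1 : d 3 = d 0 := by have := (hdrec 0).2.2.2; simpa using this
      have h2 : z 1 = z 0 := by have := (hzrec 0).2.1; simpa using this
      have h3 : z 0 = false := by have := (hzrec 0).1; simpa using this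
      rw [show Ppos 0 + 1 = 3 from rfl, h1, hd0, h2, h3]
  | succ t ih =>
    intro j hj
    have hQ : Qlen (t+1) = 4 * Qlen t - 2 := rfl
    have hQ2 : 2 ≤ Qlen t := by have := Qlen_ge t; omega
    have hP : Ppos (t+1) = 4 * Ppos t + 2 := rfl
    have h4 : j % 4 = 0 ∨ j % 4 = 1 ∨ j % 4 = 2 ∨ j % 4 = 3 := by omega
    rcases h4 with h | h | h | h
    · obtain ⟨a, rfl⟩ : ∃ a, j = 4*a := ⟨j/4, by omega⟩
      rw [show Ppos (t+1) + 4*a = 4*(Ppos t + a) + 2 by rw [hP]; ring]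
      rw [(hdrec _).2.2.1, (hzrec a).1]
    · obtain ⟨a, rfl⟩ : ∃ a, j = 4*a+1 := ⟨j/4, by omega⟩
      rw [show Ppos (t+1) + (4*a+1) = 4*(Ppos t + a) + 3 by rw [hP]; ring]
      rw [(hdrec _).2.2.2, (hzrec a).2.1]
      exact ih a (by omega)
    · obtain ⟨a, rfl⟩ : ∃ a, j = 4*a+2 := ⟨j/4, by omega⟩
      rw [show Ppos (t+1) + (4*a+2) = 4*(Ppos t + a + 1) by rw [hP]; ring]
      rw [(hdrec _).1, (hzrec a).2.2.1]
    · obtain ⟨a, rfl⟩ : ∃ a, j = 4*a+3 := ⟨j/4, by omega⟩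
      rw [show Ppos (t+1) + (4*a+3) = 4*(Ppos t + a + 1) + 1 by rw [hP]; ring]
      rw [(hdrec _).2.1, (hzrec a).2.2.2]

lemma factor_eval {A : Type*} {w : List A} {x : ℕ → A} {i : ℕ}
    (hw : w = List.ofFn (fun j : Fin w.length => x (i + j))) (k : ℕ) (hk : k < w.length) :
    w[k] = x (i + k) := by
  have h1 : w[k]? = some (x (i+k)) := by
    conv_lhs => rw [hw]
    simp [List.getElem?_ofFn, hk]
  rw [List.getElem?_eq_getElem hk] at h1
  exact Option.some_inj.mp h1

lemma factor_build {A : Type*} (w : List A) (x : ℕ → A) (i : ℕ)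
    (h : ∀ k, (hk : k < w.length) → w[k] = x (i + k)) :
    w = List.ofFn (fun j : Fin w.length => x (i + j)) := by
  apply List.ext_getElem (by simp)
  intro k hk1 hk2
  simp only [List.getElem_ofFn]
  exact h k hk1

end PD2

theorem stmt10 (d z : ℕ → Bool)
    (hd : IsPureMorphic pdMorph false d) (hz : IsPureMorphic gMorph false z) :
    IsLeastWord (· < ·) d false z := by
  obtain ⟨hd0, hdgen, hxd⟩ := hd
  obtain ⟨hz0, hzgen, hxz⟩ := hz
  refine ⟨?_, hz0, ?_⟩
  · -- orbit closure
    rintro w ⟨i, hw⟩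
    set t := i + w.length with ht
    refine ⟨Ppos t + i, ?_⟩
    apply factor_build
    intro k hk
    rw [factor_eval hw k hk]
    have := occ hd0 hxd hxz t (i + k) (by have := Qlen_ge t; omega)
    rw [← Nat.add_assoc] at this
    exact this.symm
  · intro y hy hy0
    by_cases hzy : z = y
    · right; exact hzy
    left
    have hne : ∃ n, z n ≠ y n := by
      by_contra h
      push_neg at h
      exact hzy (funext h)
    classical
    have hn : z (Nat.find hne) ≠ y (Nat.find hne) := Nat.find_spec hne
    have hltn : ∀ i, i < Nat.find hne → z i = y i :=
      fun i hi => not_not.mp (Nat.find_min hne hi)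
    set n := Nat.find hne with hndef
    refine ⟨n, hltn, ?_⟩
    have key : ¬ (z n = true ∧ y n = false) := by
      rintro ⟨hzn, hyn⟩
      have hfac : IsFactor (wordPrefix y (n+1)) y := by
        refine ⟨0, ?_⟩
        apply factor_build
        intro k hk
        simp only [wordPrefix] at hk ⊢
        simp only [List.getElem_ofFn]
        rw [Nat.zero_add]
      obtain ⟨i, hi⟩ := hy _ hfac
      refine keyK hxd hxz n hzn i ?_
      intro j hj
      have hlen : (wordPrefix y (n+1)).length = n+1 := by simp [wordPrefix]
      have h1 : (wordPrefix y (n+1))[j]'(by omega) = d (i + j) :=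
        factor_eval hi j (by omega)
      have h2 : (wordPrefix y (n+1))[j]'(by omega) = y j := by
        simp only [wordPrefix, List.getElem_ofFn]
      rw [show i + j = i + j by rfl] at h1
      rw [h2] at h1
      rw [← h1]
      by_cases hjn : j = n
      · rw [if_pos hjn, hjn, hyn]
      · rw [if_neg hjn, ← hltn j (by omega)]
    show z n < y n
    cases hzn : z n with
    | false =>
      cases hyn : y n with
      | false => exact absurd (hzn.trans hyn.symm) hn
      | true => exact Bool.lt_iff.mpr ⟨rfl, rfl⟩
    | true =>
      cases hyn : y n with
      | true => exact absurd (hzn.trans hyn.symm) hn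
      | false => exact absurd ⟨hzn, hyn⟩ key
end

section
/- Let d be the period-doubling word (fixed point of f : 0 ↦ 01, 1 ↦ 00) and z = g^ω(0) the fixed point of g : 0 ↦ 0001, 1 ↦ 0101. With respect to the reversed order 1 < 0, the lexicographically least word in the shift orbit closure of d beginning with 0 is f(z). -/
namespace Stmt11Aux

lemma length_flatMap_const {A B : Type*} (f : A → List B) (c : ℕ)
    (hc : ∀ a, (f a).length = c) : ∀ w : List A, (w.flatMap f).length = c * w.length := by
  intro w
  induction w with
  | nil => simp
  | cons a t ih =>
    simp only [List.flatMap_cons, List.length_append, ih, hc, List.length_cons]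
    ring

lemma getElem?_flatMap {A B : Type*} (f : A → List B) (c : ℕ)
    (hc : ∀ a, (f a).length = c) :
    ∀ (w : List A) (k s : ℕ) (hk : k < w.length), s < c →
      (w.flatMap f)[c * k + s]? = (f w[k])[s]? := by
  intro w
  induction w with
  | nil => intro k s hk; simp at hk
  | cons a t ih =>
    intro k s hk hs
    cases k with
    | zero =>
      simp only [List.flatMap_cons]
      rw [Nat.mul_zero, Nat.zero_add,
        List.getElem?_append_left (by rw [hc]; exact hs)]
      simp
    | succ k =>
      simp only [List.flatMap_cons]
      rw [List.getElem?_append_right (by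
        rw [hc]
        have : c * (k+1) + s = c + (c * k + s) := by ring
        omega)]
      have h1 : c * (k+1) + s - (f a).length = c * k + s := by
        rw [hc]; have : c * (k+1) + s = c + (c * k + s) := by ring
        omega
      rw [h1, ih k s (by simpa using hk) hs]
      simp

lemma prefix_getElem {A : Type*} {w : List A} {x : ℕ → A} (h : IsPrefixOfWord w x)
    {j : ℕ} (hj : j < w.length) : x j = w[j] := by
  have h2 := congrArg (fun l => l[j]?) h
  simp only [wordPrefix] at h2
  rw [List.getElem?_ofFn] at h2
  simp only [List.ofFnNthVal, hj, dif_pos] at h2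
  rw [List.getElem?_eq_getElem hj] at h2
  exact Option.some.inj h2

lemma image_letter {A B : Type*} (f : A → List B) (c : ℕ)
    (hc : ∀ a, (f a).length = c) {x : ℕ → A} {y : ℕ → B} (h : IsWordImage f x y)
    (k s : ℕ) (hs : s < c) : (f (x k))[s]? = some (y (c * k + s)) := by
  have hp := h (k+1)
  have hlenp : (wordPrefix x (k+1)).length = k + 1 := by simp [wordPrefix]
  have hlen : (applyMorphism f (wordPrefix x (k+1))).length = c * (k+1) := by
    unfold applyMorphism
    rw [length_flatMap_const f c hc, hlenp]
  have hk : k < (wordPrefix x (k+1)).length := by omega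
  have hidx : c * k + s < (applyMorphism f (wordPrefix x (k+1))).length := by
    rw [hlen]; have : c * (k+1) = c * k + c := by ring
    omega
  have e1 : y (c * k + s) = (applyMorphism f (wordPrefix x (k+1)))[c*k+s] :=
    prefix_getElem hp hidx
  have e2 : (applyMorphism f (wordPrefix x (k+1)))[c * k + s]? =
      (f ((wordPrefix x (k+1))[k]))[s]? := getElem?_flatMap f c hc _ k s hk hs
  have e3 : (wordPrefix x (k+1))[k] = x k := by
    simp only [wordPrefix]
    rw [List.getElem_ofFn]
  rw [e3] at e2
  rw [← e2, List.getElem?_eq_getElem hidx, ← e1]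


variable {d z fz : ℕ → Bool}

lemma dblock (hd : IsWordImage pdMorph d d) :
    ∀ k, d (2*k) = false ∧ d (2*k+1) = !d k := by
  intro k
  have h0 := image_letter pdMorph 2 (by intro a; cases a <;> rfl) hd k 0 (by norm_num)
  have h1 := image_letter pdMorph 2 (by intro a; cases a <;> rfl) hd k 1 (by norm_num)
  constructor
  · cases hk : d k <;> rw [hk] at h0 <;> simp [pdMorph] at h0 <;> simpa using h0
  · cases hk : d k <;> rw [hk] at h1 <;> simp [pdMorph] at h1 <;> simp [h1]

lemma zblock (hz : IsWordImage gMorph z z) :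
    ∀ k, z (4*k) = false ∧ z (4*k+1) = z k ∧ z (4*k+2) = false ∧ z (4*k+3) = true := by
  intro k
  have hc : ∀ a, (gMorph a).length = 4 := by intro a; cases a <;> rfl
  have h0 := image_letter gMorph 4 hc hz k 0 (by norm_num)
  have h1 := image_letter gMorph 4 hc hz k 1 (by norm_num)
  have h2 := image_letter gMorph 4 hc hz k 2 (by norm_num)
  have h3 := image_letter gMorph 4 hc hz k 3 (by norm_num)
  refine ⟨?_, ?_, ?_, ?_⟩
  · cases hk : z k <;> rw [hk] at h0 <;> simp [gMorph] at h0 <;> simpa using h0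
  · cases hk : z k <;> rw [hk] at h1 <;> simp [gMorph] at h1 <;> simp [h1]
  · cases hk : z k <;> rw [hk] at h2 <;> simp [gMorph] at h2 <;> simpa using h2
  · cases hk : z k <;> rw [hk] at h3 <;> simp [gMorph] at h3 <;> simpa using h3

lemma fzblock (hfz : IsWordImage pdMorph z fz) :
    ∀ k, fz (2*k) = false ∧ fz (2*k+1) = !z k := by
  intro k
  have h0 := image_letter pdMorph 2 (by intro a; cases a <;> rfl) hfz k 0 (by norm_num)
  have h1 := image_letter pdMorph 2 (by intro a; cases a <;> rfl) hfz k 1 (by norm_num)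
  constructor
  · cases hk : z k <;> rw [hk] at h0 <;> simp [pdMorph] at h0 <;> simpa using h0
  · cases hk : z k <;> rw [hk] at h1 <;> simp [pdMorph] at h1 <;> simp [h1]

section Blocks

variable (hD : ∀ k, d (2*k) = false ∧ d (2*k+1) = !d k)
variable (hZ : ∀ k, z (4*k) = false ∧ z (4*k+1) = z k ∧ z (4*k+2) = false ∧ z (4*k+3) = true)
variable (hF : ∀ k, fz (2*k) = false ∧ fz (2*k+1) = !z k)

include hD in
lemma d4 : ∀ k, d (4*k) = false ∧ d (4*k+1) = true ∧ d (4*k+2) = false ∧ d (4*k+3) = d k := by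
  intro k
  have e0 : 4*k = 2*(2*k) := by ring
  have e1 : 4*k+1 = 2*(2*k)+1 := by ring
  have e2 : 4*k+2 = 2*(2*k+1) := by ring
  have e3 : 4*k+3 = 2*(2*k+1)+1 := by ring
  refine ⟨by rw [e0]; exact (hD _).1, ?_, by rw [e2]; exact (hD _).1, ?_⟩
  · rw [e1, (hD _).2, (hD _).1]; rfl
  · rw [e3, (hD _).2, (hD _).2, Bool.not_not]

include hZ in
lemma zeven : ∀ m, z (2*m) = false := by
  intro m
  rcases Nat.even_or_odd m with ⟨j, hj⟩ | ⟨j, hj⟩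
  · have : 2*m = 4*j := by omega
    rw [this]; exact (hZ j).1
  · have : 2*m = 4*j+2 := by omega
    rw [this]; exact (hZ j).2.2.1

include hZ hF in
lemma fz4 : ∀ k, fz (4*k) = false ∧ fz (4*k+1) = true ∧ fz (4*k+2) = false ∧
    fz (4*k+3) = fz (k+1) := by
  intro k
  have e0 : 4*k = 2*(2*k) := by ring
  have e1 : 4*k+1 = 2*(2*k)+1 := by ring
  have e2 : 4*k+2 = 2*(2*k+1) := by ring
  have e3 : 4*k+3 = 2*(2*k+1)+1 := by ring
  refine ⟨by rw [e0]; exact (hF _).1, ?_, by rw [e2]; exact (hF _).1, ?_⟩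
  · rw [e1, (hF _).2, zeven hZ]; rfl
  · rw [e3, (hF _).2]
    rcases Nat.even_or_odd k with ⟨j, hj⟩ | ⟨j, hj⟩
    · have ea : 2*k+1 = 4*j+1 := by omega
      have eb : k+1 = 2*j+1 := by omega
      rw [ea, (hZ j).2.1, eb, (hF j).2]
    · have ea : 2*k+1 = 4*j+3 := by omega
      have eb : k+1 = 2*(j+1) := by omega
      rw [ea, (hZ j).2.2.2, eb, (hF _).1]; rfl

end Blocks

end Stmt11Aux

namespace Stmt11Aux

section Core

variable {d z fz : ℕ → Bool}
variable (hD : ∀ k, d (2*k) = false ∧ d (2*k+1) = !d k)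
variable (hZ : ∀ k, z (4*k) = false ∧ z (4*k+1) = z k ∧ z (4*k+2) = false ∧ z (4*k+3) = true)
variable (hF : ∀ k, fz (2*k) = false ∧ fz (2*k+1) = !z k)

include hD hZ in
lemma Blem : ∀ m i, d i = false → (∀ j, j < m → z (1+j) = d (i+1+j)) →
    ¬(z (1+m) = true ∧ d (i+1+m) = false) := by
  have hd4 := d4 (d := d) hD
  have z0 : z 0 = false := by simpa using (hZ 0).1
  have z1 : z 1 = false := by have := (hZ 0).2.1; simpa [z0] using this
  have z2 : z 2 = false := by simpa using (hZ 0).2.2.1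
  intro m
  induction m using Nat.strong_induction_on with
  | _ m IH =>
  intro i hdi hag hbad
  obtain ⟨hz1, hdd⟩ := hbad
  obtain ⟨q, r, hr4, rfl⟩ : ∃ q r, r < 4 ∧ i = 4*q+r :=
    ⟨i/4, i%4, Nat.mod_lt _ (by norm_num), by omega⟩
  obtain ⟨k, s, hs4, rfl⟩ : ∃ k s, s < 4 ∧ m = 4*k+s :=
    ⟨m/4, m%4, Nat.mod_lt _ (by norm_num), by omega⟩
  interval_cases s
  · -- s = 0 : z (1+m) = z (4k+1) = z k
    rw [show 1+(4*k+0) = 4*k+1 from by ring, (hZ k).2.1] at hz1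
    rcases Nat.eq_zero_or_pos k with rfl | hk
    · rw [z0] at hz1; exact absurd hz1 (by simp)
    interval_cases r
    · have h := hag 0 (by omega)
      rw [show (1:ℕ)+0 = 1 from rfl, show 4*q+0+1+0 = 4*q+1 from by ring,
        z1, (hd4 q).2.1] at h
      exact absurd h (by simp)
    · rw [(hd4 q).2.1] at hdi
      exact absurd hdi (by simp)
    · -- r = 2 : recursive case
      rw [show 4*q+2+1+(4*k+0) = 4*(q+k)+3 from by ring, (hd4 (q+k)).2.2.2] at hdd
      cases hq : d q with
      | true =>
        have h := hag 0 (by omega)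
        rw [show (1:ℕ)+0 = 1 from rfl, show 4*q+2+1+0 = 4*q+3 from by ring,
          z1, (hd4 q).2.2.2, hq] at h
        exact absurd h (by simp)
      | false =>
        refine IH (k-1) (by omega) q hq ?_ ⟨?_, ?_⟩
        · intro j hj
          have h := hag (4*j+4) (by omega)
          rw [show 1+(4*j+4) = 4*(j+1)+1 from by ring, (hZ (j+1)).2.1,
            show 4*q+2+1+(4*j+4) = 4*(q+j+1)+3 from by ring, (hd4 (q+j+1)).2.2.2] at h
          rw [show 1+j = j+1 from by ring, show q+1+j = q+j+1 from by ring]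
          exact h
        · rw [show 1+(k-1) = k from by omega]; exact hz1
        · rw [show q+1+(k-1) = q+k from by omega]; exact hdd
    · -- r = 3 (s = 0)
      have h := hag 1 (by omega)
      rw [show (1:ℕ)+1 = 2 from rfl, show 4*q+3+1+1 = 4*(q+1)+1 from by ring,
        z2, (hd4 (q+1)).2.1] at h
      exact absurd h (by simp)
  · -- s = 1 : z (1+m) = z (4k+2) = false
    rw [show 1+(4*k+1) = 4*k+2 from by ring, (hZ k).2.2.1] at hz1
    exact absurd hz1 (by simp)
  · -- s = 2 : z (1+m) = z(4k+3) = true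
    interval_cases r
    · have h := hag 0 (by omega)
      rw [show (1:ℕ)+0 = 1 from rfl, show 4*q+0+1+0 = 4*q+1 from by ring,
        z1, (hd4 q).2.1] at h
      exact absurd h (by simp)
    · rw [(hd4 q).2.1] at hdi
      exact absurd hdi (by simp)
    · rw [show 4*q+2+1+(4*k+2) = 4*(q+k+1)+1 from by ring, (hd4 (q+k+1)).2.1] at hdd
      exact absurd hdd (by simp)
    · have h := hag 1 (by omega)
      rw [show (1:ℕ)+1 = 2 from rfl, show 4*q+3+1+1 = 4*(q+1)+1 from by ring,
        z2, (hd4 (q+1)).2.1] at h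
      exact absurd h (by simp)
  · -- s = 3 : z (1+m) = z (4(k+1)) = false
    rw [show 1+(4*k+3) = 4*(k+1) from by ring, (hZ (k+1)).1] at hz1
    exact absurd hz1 (by simp)

include hD hZ in
lemma Alem : ∀ m i, (∀ j, j < m → z j = d (i+j)) → ¬(z m = true ∧ d (i+m) = false) := by
  have hd4 := d4 (d := d) hD
  have z0 : z 0 = false := by simpa using (hZ 0).1
  have z1 : z 1 = false := by have := (hZ 0).2.1; simpa [z0] using this
  have z2 : z 2 = false := by simpa using (hZ 0).2.2.1
  intro m i hag hbad
  obtain ⟨hz1, hdd⟩ := hbad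
  obtain ⟨q, r, hr4, rfl⟩ : ∃ q r, r < 4 ∧ i = 4*q+r :=
    ⟨i/4, i%4, Nat.mod_lt _ (by norm_num), by omega⟩
  obtain ⟨k, s, hs4, rfl⟩ : ∃ k s, s < 4 ∧ m = 4*k+s :=
    ⟨m/4, m%4, Nat.mod_lt _ (by norm_num), by omega⟩
  interval_cases s
  · rw [show 4*k+0 = 4*k from rfl, (hZ k).1] at hz1
    exact absurd hz1 (by simp)
  · -- s = 1 : z m = z k
    rw [(hZ k).2.1] at hz1
    rcases Nat.eq_zero_or_pos k with rfl | hk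
    · rw [z0] at hz1; exact absurd hz1 (by simp)
    interval_cases r
    · have h := hag 1 (by omega)
      rw [show 4*q+0+1 = 4*q+1 from by ring, z1, (hd4 q).2.1] at h
      exact absurd h (by simp)
    · have h := hag 0 (by omega)
      rw [show 4*q+1+0 = 4*q+1 from by ring, z0, (hd4 q).2.1] at h
      exact absurd h (by simp)
    · -- r = 2 : reduce to Blem
      rw [show 4*q+2+(4*k+1) = 4*(q+k)+3 from by ring, (hd4 (q+k)).2.2.2] at hdd
      cases hq : d q with
      | true =>
        have h := hag 1 (by omega)
        rw [show 4*q+2+1 = 4*q+3 from by ring, z1, (hd4 q).2.2.2, hq] at h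
        exact absurd h (by simp)
      | false =>
        refine Blem hD hZ (k-1) q hq ?_ ⟨?_, ?_⟩
        · intro j hj
          have h := hag (4*j+5) (by omega)
          rw [show 4*j+5 = 4*(j+1)+1 from by ring, (hZ (j+1)).2.1,
            show 4*q+2+(4*(j+1)+1) = 4*(q+j+1)+3 from by ring, (hd4 (q+j+1)).2.2.2] at h
          rw [show 1+j = j+1 from by ring, show q+1+j = q+j+1 from by ring]
          exact h
        · rw [show 1+(k-1) = k from by omega]; exact hz1
        · rw [show q+1+(k-1) = q+k from by omega]; exact hdd
    · -- r = 3
      cases hq : d q with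
      | true =>
        have h := hag 0 (by omega)
        rw [show 4*q+3+0 = 4*q+3 from by ring, z0, (hd4 q).2.2.2, hq] at h
        exact absurd h (by simp)
      | false =>
        have h := hag 2 (by omega)
        rw [show 4*q+3+2 = 4*(q+1)+1 from by ring, z2, (hd4 (q+1)).2.1] at h
        exact absurd h (by simp)
  · rw [(hZ k).2.2.1] at hz1
    exact absurd hz1 (by simp)
  · -- s = 3 : z m = true
    interval_cases r
    · have h := hag 1 (by omega)
      rw [show 4*q+0+1 = 4*q+1 from by ring, z1, (hd4 q).2.1] at h
      exact absurd h (by simp)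
    · have h := hag 0 (by omega)
      rw [show 4*q+1+0 = 4*q+1 from by ring, z0, (hd4 q).2.1] at h
      exact absurd h (by simp)
    · rw [show 4*q+2+(4*k+3) = 4*(q+k+1)+1 from by ring, (hd4 (q+k+1)).2.1] at hdd
      exact absurd hdd (by simp)
    · cases hq : d q with
      | true =>
        have h := hag 0 (by omega)
        rw [show 4*q+3+0 = 4*q+3 from by ring, z0, (hd4 q).2.2.2, hq] at h
        exact absurd h (by simp)
      | false =>
        have h := hag 2 (by omega)
        rw [show 4*q+3+2 = 4*(q+1)+1 from by ring, z2, (hd4 (q+1)).2.1] at h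
        exact absurd h (by simp)

include hD hZ hF in
lemma Plem : ∀ n i, d i = false → (∀ j, j < n → fz j = d (i+j)) →
    ¬(fz n = false ∧ d (i+n) = true) := by
  have z0 : z 0 = false := by simpa using (hZ 0).1
  have fz1 : fz 1 = true := by have := (hF 0).2; simp [z0] at this; simpa using this
  intro n i hdi hag hbad
  obtain ⟨hfn, hdd⟩ := hbad
  rcases Nat.eq_zero_or_pos n with rfl | hn
  · rw [show i+0 = i from rfl, hdi] at hdd
    exact absurd hdd (by simp)
  obtain ⟨q, r, hr2, rfl⟩ : ∃ q r, r < 2 ∧ i = 2*q+r :=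
    ⟨i/2, i%2, Nat.mod_lt _ (by norm_num), by omega⟩
  obtain ⟨k, s, hs2, rfl⟩ : ∃ k s, s < 2 ∧ n = 2*k+s :=
    ⟨n/2, n%2, Nat.mod_lt _ (by norm_num), by omega⟩
  interval_cases s
  · -- n even
    interval_cases r
    · rw [show 2*q+0+(2*k+0) = 2*(q+k) from by ring, (hD (q+k)).1] at hdd
      exact absurd hdd (by simp)
    · have h := hag 1 (by omega)
      rw [show 2*q+1+1 = 2*(q+1) from by ring, fz1, (hD (q+1)).1] at h
      exact absurd h (by simp)
  · -- n odd
    interval_cases r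
    · -- i even : reduce to Alem
      rw [show 2*k+1 = 2*k+1 from rfl, (hF k).2] at hfn
      have hzk : z k = true := by simpa using hfn
      rw [show 2*q+0+(2*k+1) = 2*(q+k)+1 from by ring, (hD (q+k)).2] at hdd
      have hdqk : d (q+k) = false := by simpa using hdd
      refine Alem hD hZ k q ?_ ⟨hzk, hdqk⟩
      intro j hj
      have h := hag (2*j+1) (by omega)
      rw [(hF j).2, show 2*q+0+(2*j+1) = 2*(q+j)+1 from by ring, (hD (q+j)).2] at h
      exact Bool.not_inj h
    · rw [show 2*q+1+(2*k+1) = 2*(q+k+1) from by ring, (hD (q+k+1)).1] at hdd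
      exact absurd hdd (by simp)


include hD in
lemma Cd : ∀ N p q, d p = d q → ∀ j, j < 2^N → d (2^N*p + j) = d (2^N*q + j) := by
  intro N
  induction N with
  | zero =>
    intro p q h j hj
    interval_cases j
    simpa using h
  | succ N ih =>
    intro p q h j hj
    have hpos : 0 < 2^N := by positivity
    obtain ⟨e, j', he, hj', rfl⟩ : ∃ e j', e < 2 ∧ j' < 2^N ∧ j = 2^N*e + j' := by
      refine ⟨j / 2^N, j % 2^N, ?_, Nat.mod_lt _ hpos, ?_⟩
      · refine (Nat.div_lt_iff_lt_mul hpos).2 ?_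
        rw [pow_succ] at hj
        omega
      · exact (Nat.div_add_mod j (2^N)).symm
    have hidx : ∀ p : ℕ, 2^(N+1)*p + (2^N*e+j') = 2^N*(2*p+e) + j' := by
      intro p; rw [pow_succ]; ring
    rw [hidx p, hidx q]
    refine ih (2*p+e) (2*q+e) ?_ j' hj'
    interval_cases e
    · rw [show 2*p+0 = 2*p from rfl, show 2*q+0 = 2*q from rfl, (hD p).1, (hD q).1]
    · rw [(hD p).2, (hD q).2, h]

include hD in
lemma drec : ∀ t n N₀, ∃ t', N₀ ≤ t' ∧ ∀ j, j < n → d (t'+j) = d (t+j) := by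
  intro t n N₀
  set N := t + n with hN
  have hNle : t + n ≤ 2^N := le_of_lt (Nat.lt_two_pow_self (n := N))
  have hd0 : d (2*N₀) = d 0 := by
    have a : d (2*N₀) = false := (hD N₀).1
    have b : d 0 = false := by simpa using (hD 0).1
    rw [a, b]
  refine ⟨2^N * (2*N₀) + t, ?_, ?_⟩
  · have h1 : 1 ≤ 2^N := Nat.one_le_two_pow
    have h2 : 1*(2*N₀) ≤ 2^N*(2*N₀) := Nat.mul_le_mul_right _ h1
    omega
  · intro j hj
    have h := Cd hD N (2*N₀) 0 hd0 (t+j) (by omega)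
    rw [Nat.mul_zero, Nat.zero_add] at h
    rw [show 2^N*(2*N₀)+t+j = 2^N*(2*N₀)+(t+j) from by ring]
    exact h

include hD hZ hF in
lemma Olem : ∀ n i, ∃ t, ∀ j, j < n → fz (i+j) = d (t+j) := by
  have hd4 := d4 (d := d) hD
  have hf4 := fz4 (z := z) (fz := fz) hZ hF
  have d0 : d 0 = false := by simpa using (hd4 0).1
  have d1 : d 1 = true := by simpa using (hd4 0).2.1
  have d2 : d 2 = false := by simpa using (hd4 0).2.2.1
  have d3 : d 3 = false := by have := (hd4 0).2.2.2; simp at this; rw [this, d0]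
  have d4' : d 4 = false := by simpa using (hd4 1).1
  intro n
  induction n using Nat.strong_induction_on with
  | _ n IH =>
  intro i
  by_cases h2 : n ≤ 2
  · obtain ⟨a, b, hb4, rfl⟩ : ∃ a b, b < 4 ∧ i = 4*a+b :=
      ⟨i/4, i%4, Nat.mod_lt _ (by norm_num), by omega⟩
    interval_cases n
    · exact ⟨0, fun j hj => absurd hj (by omega)⟩
    · cases hv : fz (4*a+b) with
      | false =>
        refine ⟨0, ?_⟩
        intro j hj
        interval_cases j
        simp only [Nat.add_zero, Nat.zero_add]
        rw [hv, d0]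
      | true =>
        refine ⟨1, ?_⟩
        intro j hj
        interval_cases j
        simp only [Nat.add_zero, Nat.zero_add]
        rw [hv, d1]
    · interval_cases b
    -- b = 0
      · refine ⟨0, ?_⟩
        intro j hj
        interval_cases j
        · simp only [Nat.add_zero, Nat.zero_add]
          rw [(hf4 a).1, d0]
        · simp only [Nat.add_zero, Nat.zero_add]
          rw [show 4*a+0+1 = 4*a+1 from by ring, (hf4 a).2.1, d1]
    -- b = 1
      · refine ⟨1, ?_⟩
        intro j hj
        interval_cases j
        · simp only [Nat.add_zero]
          rw [(hf4 a).2.1, d1]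
        · rw [show 4*a+1+1 = 4*a+2 from by ring, (hf4 a).2.2.1, show (1:ℕ)+1 = 2 from rfl, d2]
    -- b = 2
      · cases hv : fz (a+1) with
        | true =>
          refine ⟨0, ?_⟩
          intro j hj
          interval_cases j
          · simp only [Nat.add_zero, Nat.zero_add]
            rw [(hf4 a).2.2.1, d0]
          · simp only [Nat.add_zero, Nat.zero_add]
            rw [show 4*a+2+1 = 4*a+3 from by ring, (hf4 a).2.2.2, hv, d1]
        | false =>
          refine ⟨2, ?_⟩
          intro j hj
          interval_cases j
          · simp only [Nat.add_zero]
            rw [(hf4 a).2.2.1, d2]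
          · rw [show 4*a+2+1 = 4*a+3 from by ring, (hf4 a).2.2.2, hv,
              show (2:ℕ)+1 = 3 from rfl, d3]
    -- b = 3
      · cases hv : fz (a+1) with
        | true =>
          refine ⟨1, ?_⟩
          intro j hj
          interval_cases j
          · simp only [Nat.add_zero]
            rw [(hf4 a).2.2.2, hv, d1]
          · rw [show 4*a+3+1 = 4*(a+1) from by ring, (hf4 (a+1)).1,
              show (1:ℕ)+1 = 2 from rfl, d2]
        | false =>
          refine ⟨2, ?_⟩
          intro j hj
          interval_cases j
          · simp only [Nat.add_zero]
            rw [(hf4 a).2.2.2, hv, d2]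
          · rw [show 4*a+3+1 = 4*(a+1) from by ring, (hf4 (a+1)).1,
              show (2:ℕ)+1 = 3 from rfl, d3]
  · push_neg at h2
    obtain ⟨a, b, hb4, hi⟩ : ∃ a b, b < 4 ∧ i = 4*a+b :=
      ⟨i/4, i%4, Nat.mod_lt _ (by norm_num), by omega⟩
    set M := (b + n + 3)/4 with hM
    have hMn : M < n := by omega
    obtain ⟨t₀, ht₀⟩ := IH M hMn (a+1)
    obtain ⟨t₁, ht₁N, ht₁⟩ := drec hD t₀ M a
    obtain ⟨Δ, rfl⟩ : ∃ Δ, t₁ = a + Δ := ⟨t₁ - a, by omega⟩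
    refine ⟨i + 4*Δ, ?_⟩
    intro j hj
    obtain ⟨k, s, hs4, hks⟩ : ∃ k s, s < 4 ∧ i + j = 4*k+s :=
      ⟨(i+j)/4, (i+j)%4, Nat.mod_lt _ (by norm_num), by omega⟩
    have hka : a ≤ k := by omega
    have hkM : k - a < M := by omega
    rw [show i+j = 4*k+s from hks, show i+4*Δ+j = 4*(k+Δ)+s from by omega]
    interval_cases s
    · rw [show 4*k+0 = 4*k from rfl, show 4*(k+Δ)+0 = 4*(k+Δ) from rfl,
        (hf4 k).1, (hd4 (k+Δ)).1]
    · rw [(hf4 k).2.1, (hd4 (k+Δ)).2.1]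
    · rw [(hf4 k).2.2.1, (hd4 (k+Δ)).2.2.1]
    · rw [(hf4 k).2.2.2, (hd4 (k+Δ)).2.2.2]
      have h1 := ht₀ (k-a) hkM
      have h2 := ht₁ (k-a) hkM
      rw [show a+1+(k-a) = k+1 from by omega] at h1
      rw [show a+Δ+(k-a) = k+Δ from by omega] at h2
      rw [h1, h2]


end Core

end Stmt11Aux

namespace Stmt11Aux

lemma pointwise_of_eq_ofFn {A : Type*} {x : ℕ → A} {w : List A} {i : ℕ}
    (h : w = List.ofFn (fun j : Fin w.length => x (i + j))) :
    ∀ j (hj : j < w.length), w[j] = x (i+j) := by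
  intro j hj
  have h2 := congrArg (fun l => l[j]?) h
  simp only [List.getElem?_ofFn, List.ofFnNthVal] at h2
  rw [List.getElem?_eq_getElem hj] at h2
  rw [dif_pos hj] at h2
  exact Option.some.inj h2

lemma isFactor_of_pointwise {A : Type*} {x : ℕ → A} (w : List A) (t : ℕ)
    (h : ∀ j (hj : j < w.length), w[j] = x (t+j)) : IsFactor w x := by
  refine ⟨t, ?_⟩
  refine List.ext_getElem (by simp) ?_
  intro m h₁ h₂
  rw [List.getElem_ofFn]
  exact h m h₁

lemma wordPrefix_getElem {A : Type*} (x : ℕ → A) (n j : ℕ)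
    (hj : j < (wordPrefix x n).length) : (wordPrefix x n)[j] = x j := by
  simp [wordPrefix]

end Stmt11Aux

theorem stmt11 (d z fz : ℕ → Bool)
    (hd : IsPureMorphic pdMorph false d) (hz : IsPureMorphic gMorph false z)
    (hfz : IsWordImage pdMorph z fz) :
    IsLeastWord (fun a b : Bool => b < a) d false fz := by
  obtain ⟨hd0, hdgen, hdim⟩ := hd
  obtain ⟨hz0, hzgen, hzim⟩ := hz
  have hD := Stmt11Aux.dblock hdim
  have hZ := Stmt11Aux.zblock hzim
  have hF := Stmt11Aux.fzblock hfz
  refine ⟨?_, ?_, ?_⟩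
  · -- InOrbitClosure fz d
    intro w hw
    obtain ⟨i, hwi⟩ := hw
    obtain ⟨t, ht⟩ := Stmt11Aux.Olem hD hZ hF w.length i
    refine Stmt11Aux.isFactor_of_pointwise w t ?_
    intro j hj
    rw [Stmt11Aux.pointwise_of_eq_ofFn hwi j hj, ht j hj]
  · -- fz 0 = false
    simpa using (hF 0).1
  · -- minimality
    intro y hy hy0
    by_cases heq : fz = y
    · right; exact heq
    left
    have hne : ∃ n, fz n ≠ y n := by
      by_contra hc
      push_neg at hc
      exact heq (funext hc)
    set n := Nat.find hne with hn
    have hnd : fz n ≠ y n := Nat.find_spec hne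
    have hagr : ∀ j, j < n → fz j = y j := by
      intro j hj
      have := Nat.find_min hne hj
      simpa using this
    have hyfac : IsFactor (wordPrefix y (n+1)) y := by
      refine ⟨0, ?_⟩
      refine List.ext_getElem (by simp [wordPrefix]) ?_
      intro m h₁ h₂
      rw [List.getElem_ofFn, Stmt11Aux.wordPrefix_getElem y (n+1) m h₁]
      simp
    obtain ⟨t, hwt⟩ := hy _ hyfac
    have hlen : (wordPrefix y (n+1)).length = n+1 := by simp [wordPrefix]
    have hpt : ∀ j, j ≤ n → y j = d (t+j) := by
      intro j hj
      have h1 := Stmt11Aux.pointwise_of_eq_ofFn hwt j (by omega)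
      rw [Stmt11Aux.wordPrefix_getElem y (n+1) j (by omega)] at h1
      exact h1
    have hdt : d t = false := by
      have := hpt 0 (by omega)
      rw [Nat.add_zero] at this
      rw [← this, hy0]
    have key := Stmt11Aux.Plem hD hZ hF n t hdt
      (fun j hj => (hagr j hj).trans (hpt j (by omega)))
    refine ⟨n, hagr, ?_⟩
    show y n < fz n
    have hyn : y n = d (t+n) := hpt n le_rfl
    cases hfn : fz n with
    | false =>
      cases hyn' : y n with
      | false => exact absurd (hfn.trans hyn'.symm) hnd
      | true =>
        exact absurd ⟨hfn, by rw [← hyn, hyn']⟩ key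
    | true =>
      cases hyn' : y n with
      | false => decide
      | true => exact absurd (hfn.trans hyn'.symm) hnd
end
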